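/- arXiv:2107.06663 — 2 statements merged into one kernel-verified Lean document; each statement's English description precedes it below -/
import Mathlib

section
/- Let u_1,...,u_T be i.i.d. ℝ²-valued random vectors with independent components, where u_{t1} has Pareto-like tails of index α ∈ (1,2) with mean zero and u_{t2} has mean zero and finite variance σ₂². Assume T^{-2/α} Σ_{t=1}^T u_{t1}² converges in distribution to an a.s. positive random variable S. Let e_t = B u_t with B = [[B_{11}, B_{12}], [b_{21}/T^θ, B_{22}]], θ = 1/α − 1/2, B invertible with B_{11} ≠ 0. Then the sample correlation coefficient c_T = (Σ_t e_{t1} e_{t2}) / (Σ_t e_{t1}²) converges to 0 in probability. -/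
open MeasureTheory ProbabilityTheory Filter Topology BoundedContinuousFunction

lemma aux_tendsto_zero {f : ℕ → ℝ} (h0 : ∀ n, 0 ≤ f n)
    (h : ∀ η : ℝ, 0 < η → ∀ᶠ n in atTop, f n ≤ η) : Tendsto f atTop (𝓝 0) := by
  rw [Metric.tendsto_atTop]
  intro ε hε
  obtain ⟨N, hN⟩ := Filter.eventually_atTop.mp (h (ε/2) (by positivity))
  exact ⟨N, fun n hn => by
    rw [Real.dist_eq, sub_zero, abs_of_nonneg (h0 n)]
    exact lt_of_le_of_lt (hN n hn) (by linarith)⟩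

noncomputable def clampBCF (δ : ℝ) : ℝ →ᵇ ℝ :=
  BoundedContinuousFunction.mkOfBound
    ⟨fun x => max 0 (min 1 ((2*δ - x)/δ)), continuous_const.max ((continuous_const.min ((continuous_const.sub continuous_id).div_const δ)))⟩ 1
    (fun x y => by
      simp only [ContinuousMap.coe_mk, Real.dist_eq]
      have h1 : ∀ z : ℝ, (0:ℝ) ≤ max 0 (min 1 ((2*δ - z)/δ)) := fun z => le_max_left _ _
      have h2 : ∀ z : ℝ, max 0 (min 1 ((2*δ - z)/δ)) ≤ 1 :=
        fun z => max_le (by norm_num) (min_le_left _ _)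
      rw [abs_le]
      constructor <;> nlinarith [h1 x, h2 x, h1 y, h2 y])

lemma clampBCF_apply (δ x : ℝ) : clampBCF δ x = max 0 (min 1 ((2*δ - x)/δ)) := rfl

lemma clampBCF_nonneg (δ x : ℝ) : 0 ≤ clampBCF δ x := le_max_left _ _

lemma clampBCF_le_one (δ x : ℝ) : clampBCF δ x ≤ 1 :=
  max_le (by norm_num) (min_le_left _ _)

lemma clampBCF_eq_one {δ x : ℝ} (hδ : 0 < δ) (hx : x ≤ δ) : clampBCF δ x = 1 := by
  rw [clampBCF_apply]
  have : (1:ℝ) ≤ (2*δ - x)/δ := (le_div_iff₀ hδ).2 (by linarith)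
  rw [min_eq_left this, max_eq_right (by norm_num)]

lemma clampBCF_eq_zero {δ x : ℝ} (hδ : 0 < δ) (hx : 2*δ ≤ x) : clampBCF δ x = 0 := by
  rw [clampBCF_apply]
  have h : (2*δ - x)/δ ≤ 0 := div_nonpos_of_nonpos_of_nonneg (by linarith) hδ.le
  rw [max_eq_left (le_trans (min_le_right _ _) h)]


lemma aux_ratio_bound (B11 B12 t B22 a b c q ε : ℝ)
    (ha : 0 < a) (hb : 0 ≤ b) (hba : b ≤ q * a) (hc : c^2 ≤ a * b) (hq : 0 ≤ q)
    (hden : 2*|B11*B12| *Real.sqrt q ≤ B11^2/2)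
    (hn : |B11*t| + (|B11*B22| + |B12*t|)*Real.sqrt q + |B12*B22| *q < ε * (B11^2/2))
    (hB11sq : 0 < B11^2) :
    |(B11*t*a + (B11*B22 + B12*t)*c + B12*B22*b) / (B11^2*a + 2*B11*B12*c + B12^2*b)| < ε := by
  set n : ℝ := |B11*t| + (|B11*B22| + |B12*t|)*Real.sqrt q + |B12*B22| *q with hndef
  have hsq0 : 0 ≤ Real.sqrt q := Real.sqrt_nonneg q
  have hn0 : 0 ≤ n := by positivity
  -- |c| ≤ √q * a
  have hcabs : |c| ≤ Real.sqrt q * a := by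
    have h1 : c^2 ≤ (Real.sqrt q * a)^2 := by
      rw [mul_pow, Real.sq_sqrt hq]; nlinarith
    have h2 := Real.sqrt_le_sqrt h1
    rwa [Real.sqrt_sq_eq_abs, Real.sqrt_sq (by positivity)] at h2
  -- denominator lower bound
  have k1 : -(2*(|B11*B12| *|c|)) ≤ 2*(B11*B12*c) := by
    have h := neg_abs_le (B11*B12*c)
    rw [abs_mul] at h; linarith
  have k2 : |B11*B12| *|c| ≤ |B11*B12| *(Real.sqrt q * a) :=
    mul_le_mul_of_nonneg_left hcabs (abs_nonneg _)
  have k3 : (2*|B11*B12| *Real.sqrt q) * a ≤ (B11^2/2) * a :=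
    mul_le_mul_of_nonneg_right hden ha.le
  have hD : a*(B11^2/2) ≤ B11^2*a + 2*B11*B12*c + B12^2*b := by
    nlinarith [mul_nonneg (sq_nonneg B12) hb]
  have hDpos : 0 < B11^2*a + 2*B11*B12*c + B12^2*b :=
    lt_of_lt_of_le (by positivity) hD
  -- numerator bound
  have hNabs : |B11*t*a + (B11*B22 + B12*t)*c + B12*B22*b| ≤ n * a := by
    have h1 := abs_add_le (B11*t*a + (B11*B22+B12*t)*c) (B12*B22*b)
    rw [abs_mul, abs_of_nonneg hb] at h1
    have h3 := abs_add_le (B11*B22) (B12*t)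
    have h2 : |B11*t*a + (B11*B22+B12*t)*c| ≤ |B11*t| * a + |B11*B22+B12*t| * |c| := by
      calc |B11*t*a + (B11*B22+B12*t)*c| ≤ |B11*t*a| + |(B11*B22+B12*t)*c| := abs_add_le _ _
        _ = |B11*t| * a + |B11*B22+B12*t| * |c| := by
            rw [abs_mul (B11*B22+B12*t) c, abs_mul (B11*t) a, abs_of_pos ha]
    have h4 : |B11*B22+B12*t| *|c| ≤ (|B11*B22| + |B12*t|)*(Real.sqrt q * a) :=
      mul_le_mul h3 hcabs (abs_nonneg _) (by positivity)
    have h5 : |B12*B22| *b ≤ |B12*B22| *(q*a) :=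
      mul_le_mul_of_nonneg_left hba (abs_nonneg _)
    rw [hndef]; nlinarith [mul_le_mul_of_nonneg_right h3 (abs_nonneg c)]
  rw [abs_div, abs_of_pos hDpos]
  calc |B11*t*a + (B11*B22 + B12*t)*c + B12*B22*b| / (B11^2*a + 2*B11*B12*c + B12^2*b)
      ≤ (n*a) / (a*(B11^2/2)) := by
        apply div_le_div₀ (by positivity) hNabs (by positivity) hD
    _ = n / (B11^2/2) := by rw [mul_comm n a, mul_div_mul_left _ _ (ne_of_gt ha)]
    _ < ε := by rw [div_lt_iff₀ (by positivity)]; linarith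

lemma aux_main {Ω : Type*} [MeasurableSpace Ω] (P : Measure Ω) [IsProbabilityMeasure P]
    (A Bq Cc N D : ℕ → Ω → ℝ)
    (hAmeas : ∀ T, Measurable (A T))
    (hApos : ∀ T ω, 0 ≤ A T ω) (hBqpos : ∀ T ω, 0 ≤ Bq T ω)
    (hCS : ∀ T ω, (Cc T ω)^2 ≤ A T ω * Bq T ω)
    (σsq : ℝ) (hσ : 0 < σsq)
    (hBqint : ∀ T, Integrable (Bq T) P) (hBqval : ∀ T : ℕ, ∫ ω, Bq T ω ∂P = T * σsq)
    (S : Ω → ℝ) (hSmeas : Measurable S) (hSpos : ∀ᵐ ω ∂P, 0 < S ω)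
    (ρ : ℝ) (hρ : 1 < ρ)
    (hconv : ∀ f : ℝ →ᵇ ℝ, Tendsto (fun T : ℕ => ∫ ω, f ((T:ℝ)^(-ρ) * A T ω) ∂P)
      atTop (𝓝 (∫ ω, f (S ω) ∂P)))
    (B11 B12 B22 : ℝ) (hB11 : B11 ≠ 0)
    (tseq : ℕ → ℝ) (htseq : Tendsto tseq atTop (𝓝 0))
    (hNeq : ∀ T ω, N T ω = B11*tseq T*A T ω + (B11*B22 + B12*tseq T)*Cc T ω + B12*B22*Bq T ω)
    (hDeq : ∀ T ω, D T ω = B11^2*A T ω + 2*B11*B12*Cc T ω + B12^2*Bq T ω)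
    (ε : ℝ) (hε : 0 < ε) :
    Tendsto (fun T => (P {ω | ε ≤ |N T ω / D T ω|}).toReal) atTop (𝓝 0) := by
  have hB11sq : 0 < B11 ^ 2 := by rw [← sq_abs]; exact pow_pos (abs_pos.2 hB11) 2
  -- choice of δ given a target bound
  have hδex : ∀ η : ℝ, 0 < η → ∃ δ : ℝ, 0 < δ ∧ (P {ω | S ω ≤ 2*δ}).toReal < η := by
    intro η hη
    have hmono : Antitone (fun n : ℕ => {ω | S ω ≤ 2/((n:ℝ)+1)}) := by
      intro m n hmn ω hω
      simp only [Set.mem_setOf_eq] at *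
      refine le_trans hω ?_
      gcongr
    have hmeasset : ∀ n : ℕ, NullMeasurableSet {ω | S ω ≤ 2/((n:ℝ)+1)} P :=
      fun n => (hSmeas measurableSet_Iic).nullMeasurableSet
    have hlim := tendsto_measure_iInter_atTop hmeasset hmono ⟨0, measure_ne_top _ _⟩
    have hiInter : (⋂ n : ℕ, {ω | S ω ≤ 2/((n:ℝ)+1)}) = {ω | S ω ≤ 0} := by
      ext ω
      simp only [Set.mem_iInter, Set.mem_setOf_eq]
      constructor
      · intro h
        by_contra hpos
        push_neg at hpos
        obtain ⟨n, hn⟩ := exists_nat_gt (2 / S ω)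
        have h2 : 2/((n:ℝ)+1) < S ω := by
          rw [div_lt_iff₀ (by positivity)]
          rw [div_lt_iff₀ hpos] at hn
          nlinarith
        exact absurd (h n) (not_le.2 h2)
      · intro h n; exact le_trans h (by positivity)
    have hnull : P {ω | S ω ≤ 0} = 0 := by
      have := hSpos
      rw [MeasureTheory.ae_iff] at this
      convert this using 2
      ext ω; simp
    rw [hiInter, hnull] at hlim
    have htR : Tendsto (fun n : ℕ => (P {ω | S ω ≤ 2/((n:ℝ)+1)}).toReal) atTop (𝓝 0) := by
      have h0 : ((0:ENNReal)).toReal = 0 := rfl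
      rw [← h0]
      exact (ENNReal.tendsto_toReal (by simp)).comp hlim
    obtain ⟨n, hn⟩ := (htR.eventually_lt_const hη).exists
    refine ⟨1/((n:ℝ)+1), by positivity, ?_⟩
    have : 2 * (1/((n:ℝ)+1)) = 2/((n:ℝ)+1) := by ring
    rw [this]
    exact hn
  -- distributional bound on the event that A is small
  have hAconv : ∀ δ η : ℝ, 0 < δ → (P {ω | S ω ≤ 2*δ}).toReal < η →
      ∀ᶠ T : ℕ in atTop, (P {ω | (T:ℝ)^(-ρ) * A T ω ≤ δ}).toReal ≤ η := by
    intro δ η hδ hPS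
    have hset : MeasurableSet {ω | S ω ≤ 2*δ} := hSmeas measurableSet_Iic
    have hintS : Integrable (fun ω => clampBCF δ (S ω)) P :=
      Integrable.mono' (integrable_const 1)
        ((clampBCF δ).continuous.measurable.comp hSmeas).aestronglyMeasurable
        (ae_of_all _ fun ω => by
          rw [Real.norm_eq_abs, abs_of_nonneg (clampBCF_nonneg δ _)]
          exact clampBCF_le_one _ _)
    have hfS : ∫ ω, clampBCF δ (S ω) ∂P ≤ (P {ω | S ω ≤ 2*δ}).toReal := by
      have hind : ∀ ω, clampBCF δ (S ω) ≤
          Set.indicator {ω | S ω ≤ 2*δ} (fun _ => (1:ℝ)) ω := by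
        intro ω
        by_cases h : ω ∈ {ω | S ω ≤ 2*δ}
        · rw [Set.indicator_of_mem h]; exact clampBCF_le_one _ _
        · rw [Set.indicator_of_notMem h]
          simp only [Set.mem_setOf_eq, not_le] at h
          rw [clampBCF_eq_zero hδ h.le]
      calc ∫ ω, clampBCF δ (S ω) ∂P
          ≤ ∫ ω, Set.indicator {ω | S ω ≤ 2*δ} (fun _ => (1:ℝ)) ω ∂P :=
            integral_mono hintS ((integrable_const 1).indicator hset) hind
        _ = (P {ω | S ω ≤ 2*δ}).toReal := by
            rw [integral_indicator hset]; simp; rfl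
    have hev : ∀ᶠ T : ℕ in atTop,
        ∫ ω, clampBCF δ ((T:ℝ)^(-ρ) * A T ω) ∂P < η :=
      (hconv (clampBCF δ)).eventually_lt_const (lt_of_le_of_lt hfS hPS)
    filter_upwards [hev] with T hT
    have hmA : Measurable (fun ω => (T:ℝ)^(-ρ) * A T ω) := (hAmeas T).const_mul _
    have hsetA : MeasurableSet {ω | (T:ℝ)^(-ρ) * A T ω ≤ δ} := hmA measurableSet_Iic
    have hintA : Integrable (fun ω => clampBCF δ ((T:ℝ)^(-ρ) * A T ω)) P :=
      Integrable.mono' (integrable_const 1)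
        ((clampBCF δ).continuous.measurable.comp hmA).aestronglyMeasurable
        (ae_of_all _ fun ω => by
          rw [Real.norm_eq_abs, abs_of_nonneg (clampBCF_nonneg δ _)]
          exact clampBCF_le_one _ _)
    have hptw : ∀ ω, Set.indicator {ω | (T:ℝ)^(-ρ) * A T ω ≤ δ} (fun _ => (1:ℝ)) ω ≤
        clampBCF δ ((T:ℝ)^(-ρ) * A T ω) := by
      intro ω
      by_cases h : ω ∈ {ω | (T:ℝ)^(-ρ) * A T ω ≤ δ}
      · rw [Set.indicator_of_mem h, clampBCF_eq_one hδ h]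
      · rw [Set.indicator_of_notMem h]; exact clampBCF_nonneg _ _
    have : (P {ω | (T:ℝ)^(-ρ) * A T ω ≤ δ}).toReal
        ≤ ∫ ω, clampBCF δ ((T:ℝ)^(-ρ) * A T ω) ∂P := by
      calc (P {ω | (T:ℝ)^(-ρ) * A T ω ≤ δ}).toReal
          = ∫ ω, Set.indicator {ω | (T:ℝ)^(-ρ) * A T ω ≤ δ} (fun _ => (1:ℝ)) ω ∂P := by
            rw [integral_indicator hsetA]; simp; rfl
        _ ≤ _ := integral_mono ((integrable_const 1).indicator hsetA) hintA hptw
    linarith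
  -- Markov bound for Bq
  have hMarkov : ∀ (L : ℝ) (T : ℕ), 0 < L → 0 < T →
      (P {ω | L * T ≤ Bq T ω}).toReal ≤ σsq / L := by
    intro L T hL hT
    have h := mul_meas_ge_le_integral_of_nonneg
      (ae_of_all _ (fun ω => hBqpos T ω)) (hBqint T) (L * T)
    rw [hBqval T] at h
    have hTpos : (0:ℝ) < T := by exact_mod_cast hT
    have htr : (0:ℝ) ≤ (P {ω | L * T ≤ Bq T ω}).toReal := ENNReal.toReal_nonneg
    rw [le_div_iff₀ hL]
    simp only [Measure.real] at h
    nlinarith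
  -- main argument
  apply aux_tendsto_zero (fun T => ENNReal.toReal_nonneg)
  intro η hη
  set L : ℝ := 2*σsq/η with hLdef
  have hL : 0 < L := by positivity
  obtain ⟨δ, hδ, hPS⟩ := hδex (η/2) (by positivity)
  have hA_ev := hAconv δ (η/2) hδ hPS
  set q : ℕ → ℝ := fun T => (L/δ) * (T:ℝ)^(-(ρ-1)) with hqdef
  have hq0 : ∀ T, 0 ≤ q T := fun T => by positivity
  have hqtend : Tendsto q atTop (𝓝 0) := by
    have h1 : Tendsto (fun x : ℝ => x^(-(ρ-1))) atTop (𝓝 0) :=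
      tendsto_rpow_neg_atTop (by linarith)
    have h2 : Tendsto (fun T : ℕ => ((T:ℝ))^(-(ρ-1))) atTop (𝓝 0) :=
      h1.comp tendsto_natCast_atTop_atTop
    have h3 := h2.const_mul (L/δ)
    rw [mul_zero] at h3
    exact h3
  have hsqtend : Tendsto (fun T => Real.sqrt (q T)) atTop (𝓝 0) := by
    have := (Real.continuous_sqrt.tendsto 0).comp hqtend
    rw [Real.sqrt_zero] at this; exact this
  set nseq : ℕ → ℝ := fun T =>
    |B11*tseq T| + (|B11*B22| + |B12*tseq T|) * Real.sqrt (q T) + |B12*B22| * q T with hnseq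
  have hntend : Tendsto nseq atTop (𝓝 0) := by
    have h1 : Tendsto (fun T => |B11*tseq T|) atTop (𝓝 0) := by
      have := ((htseq.const_mul B11).abs)
      simpa using this
    have h2 : Tendsto (fun T => |B12*tseq T|) atTop (𝓝 0) := by
      have := ((htseq.const_mul B12).abs)
      simpa using this
    have h3 : Tendsto (fun T => (|B11*B22| + |B12*tseq T|) * Real.sqrt (q T)) atTop (𝓝 0) := by
      have hadd : Tendsto (fun T => |B11*B22| + |B12*tseq T|) atTop (𝓝 (|B11*B22| + 0)) :=
        tendsto_const_nhds.add h2
      have := hadd.mul hsqtend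
      rw [mul_zero] at this
      exact this
    have h4 : Tendsto (fun T => |B12*B22| * q T) atTop (𝓝 0) := by
      have := hqtend.const_mul |B12*B22|
      rw [mul_zero] at this
      exact this
    have := (h1.add h3).add h4
    rw [add_zero, add_zero] at this; exact this
  have hden_ev : ∀ᶠ T in atTop, 2*|B11*B12| * Real.sqrt (q T) ≤ B11^2/2 := by
    have h0 := hsqtend.const_mul (2*|B11*B12|)
    rw [mul_zero] at h0
    exact h0.eventually_le_const (show (0:ℝ) < B11^2/2 by positivity)
  have hn_ev : ∀ᶠ T in atTop, nseq T < ε * (B11^2/2) := by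
    exact hntend.eventually_lt_const (by positivity)
  filter_upwards [hA_ev, hden_ev, hn_ev, eventually_ge_atTop 1] with T hA_T hden_T hn_T hT1
  have hTpos : 0 < T := hT1
  have hT0 : (0:ℝ) < (T:ℝ) := by exact_mod_cast hTpos
  have hTρ : (0:ℝ) < (T:ℝ)^ρ := Real.rpow_pos_of_pos hT0 _
  -- the bad events
  have hsub : {ω | ε ≤ |N T ω / D T ω|} ⊆
      {ω | (T:ℝ)^(-ρ) * A T ω ≤ δ} ∪ {ω | L * T ≤ Bq T ω} := by
    intro ω hω
    by_contra hcon
    simp only [Set.mem_union, Set.mem_setOf_eq, not_or, not_le] at hcon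
    obtain ⟨hA', hBq'⟩ := hcon
    -- A T ω > δ * T^ρ
    have hApow : δ * (T:ℝ)^ρ < A T ω := by
      have hrw : (T:ℝ)^(-ρ) = ((T:ℝ)^ρ)⁻¹ := Real.rpow_neg hT0.le _
      rw [hrw, inv_mul_eq_div, lt_div_iff₀ hTρ] at hA'
      linarith
    have ha : 0 < A T ω := lt_trans (by positivity) hApow
    have hba : Bq T ω ≤ q T * A T ω := by
      have hq' : q T * (δ * (T:ℝ)^ρ) = L * T := by
        have hTT : (T:ℝ)^(-(ρ-1)) * (T:ℝ)^ρ = (T:ℝ) := by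
          rw [← Real.rpow_add hT0, show -(ρ-1)+ρ = (1:ℝ) by ring, Real.rpow_one]
        simp only [hqdef]
        calc L/δ * (T:ℝ)^(-(ρ-1)) * (δ * (T:ℝ)^ρ)
            = (L/δ*δ) * ((T:ℝ)^(-(ρ-1)) * (T:ℝ)^ρ) := by ring
          _ = L * (T:ℝ) := by rw [hTT, div_mul_cancel₀ _ (ne_of_gt hδ)]
      have : q T * (δ * (T:ℝ)^ρ) ≤ q T * A T ω :=
        mul_le_mul_of_nonneg_left hApow.le (hq0 T)
      rw [hq'] at this
      linarith [hBq'.le, this]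
    have := aux_ratio_bound B11 B12 (tseq T) B22 (A T ω) (Bq T ω) (Cc T ω) (q T) ε
      ha (hBqpos T ω) hba (hCS T ω) (hq0 T) hden_T hn_T hB11sq
    rw [← hNeq T ω, ← hDeq T ω] at this
    simp only [Set.mem_setOf_eq] at hω
    linarith
  have hmeas_union : P {ω | ε ≤ |N T ω / D T ω|} ≤
      P {ω | (T:ℝ)^(-ρ) * A T ω ≤ δ} + P {ω | L * T ≤ Bq T ω} :=
    le_trans (measure_mono hsub) (measure_union_le _ _)
  have hMar := hMarkov L T hL hTpos
  have hσL : σsq / L = η / 2 := by rw [hLdef]; field_simp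
  rw [hσL] at hMar
  calc (P {ω | ε ≤ |N T ω / D T ω|}).toReal
      ≤ (P {ω | (T:ℝ)^(-ρ) * A T ω ≤ δ} + P {ω | L * T ≤ Bq T ω}).toReal :=
        ENNReal.toReal_mono (by exact ENNReal.add_ne_top.2 ⟨measure_ne_top _ _, measure_ne_top _ _⟩) hmeas_union
    _ = (P {ω | (T:ℝ)^(-ρ) * A T ω ≤ δ}).toReal + (P {ω | L * T ≤ Bq T ω}).toReal :=
        ENNReal.toReal_add (measure_ne_top _ _) (measure_ne_top _ _)
    _ ≤ η/2 + η/2 := add_le_add hA_T hMar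
    _ = η := by ring

/-- Choleski prewhitening lemma: in the heavy-light model the sample regression
coefficient `c_T = Σ e_{t1} e_{t2} / Σ e_{t1}²` converges to zero in probability. -/
theorem sample_correlation_tendsto_zero
    {Ω : Type*} [MeasurableSpace Ω] (P : Measure Ω) [IsProbabilityMeasure P]
    (u1 u2 : ℕ → Ω → ℝ) (hmeas1 : ∀ t, Measurable (u1 t)) (hmeas2 : ∀ t, Measurable (u2 t))
    -- iid across time with independent components
    (hiid : iIndepFun (fun t ω => (u1 t ω, u2 t ω)) P)
    (hident : ∀ t : ℕ, Measure.map (fun ω => (u1 t ω, u2 t ω)) P =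
      Measure.map (fun ω => (u1 0 ω, u2 0 ω)) P)
    (hcomp : ∀ t, IndepFun (u1 t) (u2 t) P)
    -- tail and moment assumptions
    (α C : ℝ) (hα₁ : 1 < α) (hα₂ : α < 2) (hC : 0 < C)
    (htail : Tendsto (fun x : ℝ => x ^ α * (P {ω | |u1 0 ω| > x}).toReal) atTop (𝓝 C))
    (hmean1 : ∫ ω, u1 0 ω ∂P = 0) (hmean2 : ∫ ω, u2 0 ω ∂P = 0)
    (σ₂ : ℝ) (hσ₂ : 0 < σ₂) (hvar2 : ∫ ω, (u2 0 ω) ^ 2 ∂P = σ₂ ^ 2)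
    -- convergence in distribution of the normalized sum of squares to an a.s. positive limit
    (S : Ω → ℝ) (hSmeas : Measurable S) (hSpos : ∀ᵐ ω ∂P, 0 < S ω)
    (hconv : ∀ f : ℝ →ᵇ ℝ,
      Tendsto (fun T : ℕ =>
          ∫ ω, f ((T : ℝ) ^ (-(2 / α)) * ∑ t ∈ Finset.range T, (u1 t ω) ^ 2) ∂P)
        atTop (𝓝 (∫ ω, f (S ω) ∂P)))
    -- the mixing matrix
    (B11 B12 b21 B22 θ : ℝ) (hθ : θ = 1 / α - 1 / 2) (hB11 : B11 ≠ 0)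
    (hBinv : ∀ T : ℕ, 0 < T → B11 * B22 - B12 * (b21 / (T : ℝ) ^ θ) ≠ 0) :
    TendstoInMeasure P
      (fun T ω =>
        (∑ t ∈ Finset.range T,
            (B11 * u1 t ω + B12 * u2 t ω) *
              (b21 / (T : ℝ) ^ θ * u1 t ω + B22 * u2 t ω)) /
          ∑ t ∈ Finset.range T, (B11 * u1 t ω + B12 * u2 t ω) ^ 2)
      atTop (fun _ => 0) := by
  have hα0 : (0:ℝ) < α := by linarith
  have hρ : (1:ℝ) < 2/α := (one_lt_div hα0).2 hα₂
  have hθpos : 0 < θ := by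
    rw [hθ]
    have := one_div_lt_one_div_of_lt hα0 hα₂
    linarith
  have hg : Measurable (fun p : ℝ × ℝ => p.2 ^ 2) := measurable_snd.pow_const 2
  have hpair : ∀ t, Measurable (fun ω => (u1 t ω, u2 t ω)) :=
    fun t => (hmeas1 t).prodMk (hmeas2 t)
  have hint0 : Integrable (fun ω => (u2 0 ω)^2) P := by
    by_contra h
    rw [integral_undef h] at hvar2
    nlinarith
  have hint : ∀ t, Integrable (fun ω => (u2 t ω)^2) P := by
    intro t
    have h1 : Integrable (fun p : ℝ × ℝ => p.2^2)
        (Measure.map (fun ω => (u1 t ω, u2 t ω)) P) := by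
      rw [hident t]
      exact (integrable_map_measure hg.aestronglyMeasurable (hpair 0).aemeasurable).2 hint0
    exact (integrable_map_measure hg.aestronglyMeasurable (hpair t).aemeasurable).1 h1
  have hval : ∀ t, ∫ ω, (u2 t ω)^2 ∂P = σ₂^2 := by
    intro t
    rw [← hvar2]
    calc ∫ ω, (u2 t ω)^2 ∂P
        = ∫ p, p.2^2 ∂(Measure.map (fun ω => (u1 t ω, u2 t ω)) P) :=
          (integral_map (hpair t).aemeasurable hg.aestronglyMeasurable).symm
      _ = ∫ p, p.2^2 ∂(Measure.map (fun ω => (u1 0 ω, u2 0 ω)) P) := by rw [hident t]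
      _ = ∫ ω, (u2 0 ω)^2 ∂P := integral_map (hpair 0).aemeasurable hg.aestronglyMeasurable
  have hTθ : Tendsto (fun T : ℕ => ((T:ℝ)^θ)) atTop atTop :=
    (tendsto_rpow_atTop hθpos).comp tendsto_natCast_atTop_atTop
  have htseq : Tendsto (fun T : ℕ => b21/(T:ℝ)^θ) atTop (𝓝 0) := by
    simp only [div_eq_mul_inv]
    have h1 := hTθ.inv_tendsto_atTop
    have h2 := h1.const_mul b21
    rw [mul_zero] at h2
    exact h2
  have hDeq' : ∀ (T:ℕ) (ω:Ω), (∑ t ∈ Finset.range T, (B11*u1 t ω + B12*u2 t ω)^2)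
      = B11^2*(∑ t ∈ Finset.range T, (u1 t ω)^2)
        + 2*B11*B12*(∑ t ∈ Finset.range T, u1 t ω * u2 t ω)
        + B12^2*(∑ t ∈ Finset.range T, (u2 t ω)^2) := by
    intro T ω
    rw [Finset.mul_sum, Finset.mul_sum, Finset.mul_sum, ← Finset.sum_add_distrib,
      ← Finset.sum_add_distrib]
    exact Finset.sum_congr rfl fun t _ => by ring
  have hNeq' : ∀ (T:ℕ) (ω:Ω), (∑ t ∈ Finset.range T,
        (B11*u1 t ω + B12*u2 t ω) * (b21/(T:ℝ)^θ * u1 t ω + B22*u2 t ω))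
      = B11*(b21/(T:ℝ)^θ)*(∑ t ∈ Finset.range T, (u1 t ω)^2)
        + (B11*B22 + B12*(b21/(T:ℝ)^θ))*(∑ t ∈ Finset.range T, u1 t ω * u2 t ω)
        + B12*B22*(∑ t ∈ Finset.range T, (u2 t ω)^2) := by
    intro T ω
    rw [Finset.mul_sum, Finset.mul_sum, Finset.mul_sum, ← Finset.sum_add_distrib,
      ← Finset.sum_add_distrib]
    exact Finset.sum_congr rfl fun t _ => by ring
  intro ε hε
  rcases eq_or_ne ε ⊤ with hεtop | hεtop
  · subst hεtop
    simp [edist_ne_top]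
  have hε' : 0 < ε.toReal := ENNReal.toReal_pos hε.ne' hεtop
  have key := aux_main P
    (fun T ω => ∑ t ∈ Finset.range T, (u1 t ω)^2)
    (fun T ω => ∑ t ∈ Finset.range T, (u2 t ω)^2)
    (fun T ω => ∑ t ∈ Finset.range T, u1 t ω * u2 t ω)
    (fun T ω => ∑ t ∈ Finset.range T,
      (B11 * u1 t ω + B12 * u2 t ω) * (b21/(T:ℝ)^θ * u1 t ω + B22 * u2 t ω))
    (fun T ω => ∑ t ∈ Finset.range T, (B11 * u1 t ω + B12 * u2 t ω)^2)
    (fun T => Finset.measurable_sum _ fun t _ => (hmeas1 t).pow_const 2)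
    (fun T ω => Finset.sum_nonneg fun t _ => sq_nonneg _)
    (fun T ω => Finset.sum_nonneg fun t _ => sq_nonneg _)
    (fun T ω => Finset.sum_mul_sq_le_sq_mul_sq _ _ _)
    (σ₂^2) (pow_pos hσ₂ 2)
    (fun T => integrable_finset_sum _ fun t _ => hint t)
    (fun T => by
      rw [integral_finset_sum _ fun t _ => hint t]
      simp [hval, Finset.sum_const, Finset.card_range, nsmul_eq_mul])
    S hSmeas hSpos
    (2/α) hρ
    (fun f => hconv f)
    B11 B12 B22 hB11
    (fun T => b21/(T:ℝ)^θ) htseq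
    hNeq' hDeq' ε.toReal hε'
  have h2 := ENNReal.tendsto_ofReal key
  rw [ENNReal.ofReal_zero] at h2
  refine h2.congr fun T => ?_
  rw [ENNReal.ofReal_toReal (measure_ne_top P _)]
  congr 1
  ext ω
  simp only [Set.mem_setOf_eq, edist_dist, Real.dist_0_eq_abs]
  exact (ENNReal.le_ofReal_iff_toReal_le hεtop (abs_nonneg _)).symm
end

section
/- Let {u_t} be i.i.d. ℝ²-valued with independent components, u_{t1} heavy-tailed with index α ∈ (1,2), E u_{t1} = 0, and u_{t2} mean zero with unit variance. Suppose (T^{-1/α} Σ_{t=1}^T u_{t1}, T^{-1/2} Σ_{t=1}^T u_{t2}) converges jointly in distribution to (S_u, N_u) with S_u and N_u independent. Let Y_{t2} = T^{-θ} Σ_{j≥0} c_{j,21} u_{t−j,1} + Σ_{j≥0} c_{j,22} u_{t−j,2} with θ = 1/α − 1/2 and coefficients c_{j,2i} (depending on T) converging to limits c*_{j,2i} summably and exponentially decaying in j. Then T^{-1/2} Σ_{t=1}^T Y_{t2} converges in distribution to (Σ_j c*_{j,21}) S_u + (Σ_j c*_{j,22}) N_u. -/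
set_option maxHeartbeats 1000000

open MeasureTheory ProbabilityTheory Filter Topology BoundedContinuousFunction
open scoped ENNReal NNReal

/-- A bump function: `0` on `[-(M-1), M-1]`, `1` outside `(-M, M)`. -/
noncomputable def hlBump (M : ℝ) : ℝ →ᵇ ℝ :=
  BoundedContinuousFunction.mkOfBound
    ⟨fun x => max 0 (min 1 (|x| - M + 1)), by fun_prop⟩ 2 (by
      intro x y
      have h1 : ∀ z : ℝ, 0 ≤ max 0 (min 1 (|z| - M + 1)) := fun z => le_max_left _ _
      have h2 : ∀ z : ℝ, max 0 (min 1 (|z| - M + 1)) ≤ 1 := fun z =>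
        max_le zero_le_one (min_le_left _ _)
      simp only [Real.dist_eq, ContinuousMap.coe_mk]
      have := h1 x; have := h2 x; have := h1 y; have := h2 y
      rw [abs_le]; constructor <;> linarith)

lemma hlBump_nonneg (M x : ℝ) : 0 ≤ hlBump M x := le_max_left _ _

lemma hlBump_le_one (M x : ℝ) : hlBump M x ≤ 1 := max_le zero_le_one (min_le_left _ _)

lemma hlBump_eq_one (M x : ℝ) (h : M ≤ |x|) : hlBump M x = 1 := by
  have : (1:ℝ) ≤ |x| - M + 1 := by linarith
  show max 0 (min 1 (|x| - M + 1)) = 1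
  rw [min_eq_left this, max_eq_right zero_le_one]

lemma hlBump_eq_zero (M x : ℝ) (h : |x| < M - 1) : hlBump M x = 0 := by
  have h' : |x| - M + 1 < 0 := by linarith
  show max 0 (min 1 (|x| - M + 1)) = 0
  rw [max_eq_left]
  exact le_of_lt (lt_of_le_of_lt (min_le_right _ _) h')

section Helpers

variable {Ω : Type*} [MeasurableSpace Ω] {P : Measure Ω} [IsProbabilityMeasure P]

lemma hl_integrable_of_bdd {g : Ω → ℝ} (hg : AEStronglyMeasurable g P) {C : ℝ}
    (h : ∀ ω, |g ω| ≤ C) : Integrable g P :=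
  ⟨hg, HasFiniteIntegral.of_bounded (C := C) (Eventually.of_forall (by simpa using h))⟩

/-- Bounded continuous composed with a.e.-measurable is integrable. -/
lemma hl_integrable_comp (f : ℝ →ᵇ ℝ) {g : Ω → ℝ} (hg : AEMeasurable g P) :
    Integrable (fun ω => f (g ω)) P := by
  refine hl_integrable_of_bdd (f.continuous.measurable.comp_aemeasurable hg).aestronglyMeasurable
    (C := ‖f‖) (fun ω => ?_)
  simpa [Real.norm_eq_abs] using f.norm_coe_le_norm (g ω)

/-- The measure of `{M ≤ |g|}` is bounded by the integral of the bump. -/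
lemma hl_meas_le_integral_bump {g : Ω → ℝ} (hg : Measurable g) (M : ℝ) :
    (P {ω | M ≤ |g ω|}).toReal ≤ ∫ ω, hlBump M (g ω) ∂P := by
  have hset : MeasurableSet {ω | M ≤ |g ω|} := measurableSet_le measurable_const hg.abs
  have h1 : (P {ω | M ≤ |g ω|}).toReal
      = ∫ ω, Set.indicator {ω | M ≤ |g ω|} (fun _ => (1:ℝ)) ω ∂P := by
    rw [MeasureTheory.integral_indicator_const _ hset]; simp [Measure.real]
  rw [h1]
  refine integral_mono ?_ (hl_integrable_comp (hlBump M) hg.aemeasurable) ?_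
  · exact (integrable_const (1:ℝ)).indicator hset
  · intro ω
    by_cases hω : ω ∈ {ω | M ≤ |g ω|}
    · rw [Set.indicator_of_mem hω]
      exact le_of_eq (hlBump_eq_one M (g ω) hω).symm
    · rw [Set.indicator_of_notMem hω]; exact hlBump_nonneg _ _
 
/-- The integral of the bump is bounded by the measure of `{M-1 ≤ |g|}`. -/
lemma hl_integral_bump_le {g : Ω → ℝ} (hg : Measurable g) (M : ℝ) :
    ∫ ω, hlBump M (g ω) ∂P ≤ (P {ω | M - 1 ≤ |g ω|}).toReal := by
  have hset : MeasurableSet {ω | M - 1 ≤ |g ω|} := measurableSet_le measurable_const hg.abs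
  have h1 : (P {ω | M - 1 ≤ |g ω|}).toReal
      = ∫ ω, Set.indicator {ω | M - 1 ≤ |g ω|} (fun _ => (1:ℝ)) ω ∂P := by
    rw [MeasureTheory.integral_indicator_const _ hset]; simp [Measure.real]
  rw [h1]
  refine integral_mono (hl_integrable_comp (hlBump M) hg.aemeasurable)
    ((integrable_const (1:ℝ)).indicator hset) ?_
  intro ω
  by_cases hω : ω ∈ {ω | M - 1 ≤ |g ω|}
  · rw [Set.indicator_of_mem hω]; exact hlBump_le_one _ _
  · rw [Set.indicator_of_notMem hω]
    have h2 : |g ω| < M - 1 := not_le.mp hω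
    exact le_of_eq (hlBump_eq_zero M (g ω) h2)

/-- Tail measure of a measurable real function tends to zero. -/
lemma hl_tail_tendsto {g : Ω → ℝ} (hg : Measurable g) :
    Tendsto (fun n : ℕ => P {ω | (n:ℝ) ≤ |g ω|}) atTop (𝓝 0) := by
  have hmeas : ∀ n : ℕ, MeasurableSet {ω | (n:ℝ) ≤ |g ω|} :=
    fun n => measurableSet_le measurable_const hg.abs
  have hanti : Antitone (fun n : ℕ => {ω | (n:ℝ) ≤ |g ω|}) := by
    intro m n hmn ω hω
    simp only [Set.mem_setOf_eq] at *
    have : (m:ℝ) ≤ (n:ℝ) := by exact_mod_cast hmn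
    linarith
  have hempty : (⋂ n : ℕ, {ω | (n:ℝ) ≤ |g ω|}) = (∅ : Set Ω) := by
    ext ω
    simp only [Set.mem_iInter, Set.mem_setOf_eq, Set.mem_empty_iff_false, iff_false, not_forall]
    obtain ⟨n, hn⟩ := exists_nat_gt (|g ω|)
    exact ⟨n, not_le.mpr hn⟩
  have := MeasureTheory.tendsto_measure_iInter_atTop (μ := P)
    (fun n => (hmeas n).nullMeasurableSet) hanti ⟨0, measure_ne_top _ _⟩
  rw [hempty] at this
  simpa [Function.comp_def] using this

end Helpers

lemma hl_sum_range_shift' (f : ℤ → ℝ) (T : ℕ) :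
    ∑ t ∈ Finset.range T, f ((t:ℤ) - 1)
      = f (-1) - f ((T:ℤ) - 1) + ∑ t ∈ Finset.range T, f (t:ℤ) := by
  induction T with
  | zero => simp
  | succ T ih =>
    rw [Finset.sum_range_succ, ih, Finset.sum_range_succ]
    have h1 : ((T+1:ℕ):ℤ) - 1 = (T:ℤ) := by push_cast; ring
    rw [h1]
    ring

lemma hl_sum_shift' (g : ℤ → ℝ) (T j : ℕ) :
    ∑ t ∈ Finset.range T, g ((t:ℤ) - (j:ℤ))
      = ∑ t ∈ Finset.range T, g (t:ℤ)
        + ∑ i ∈ Finset.range j, g (-1 - (i:ℤ))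
        - ∑ i ∈ Finset.range j, g ((T:ℤ) - 1 - (i:ℤ)) := by
  induction j with
  | zero => simp
  | succ j ih =>
    have key : ∀ t : ℕ, (t:ℤ) - ((j+1:ℕ):ℤ) = ((t:ℤ) - 1) - (j:ℤ) := by
      intro t; push_cast; ring
    have step : ∑ t ∈ Finset.range T, g ((t:ℤ) - ((j+1:ℕ):ℤ))
        = ∑ t ∈ Finset.range T, (fun s : ℤ => g (s - (j:ℤ))) ((t:ℤ) - 1) := by
      refine Finset.sum_congr rfl fun t _ => ?_
      rw [key t]
    rw [step, hl_sum_range_shift' (fun s : ℤ => g (s - (j:ℤ))) T]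
    rw [ih, Finset.sum_range_succ, Finset.sum_range_succ]
    ring

section Core

variable {Ω : Type*} [MeasurableSpace Ω] {P : Measure Ω} [IsProbabilityMeasure P]

/-- a.e. summability of the weighted lags. -/
lemma hl_ae_summable (u : ℤ → Ω → ℝ) (hmeas : ∀ t, Measurable (u t)) (m : ℝ≥0∞) (hm : m ≠ ⊤)
    (hmom : ∀ t, ∫⁻ ω, ‖u t ω‖₊ ∂P = m) (c : ℕ → ℝ)
    (hcsum : Summable (fun j => |c j|)) (t : ℤ) :
    ∀ᵐ ω ∂P, Summable (fun j : ℕ => c j * u (t - (j:ℤ)) ω) := by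
  set F : Ω → ℝ≥0∞ := fun ω => ∑' j : ℕ, ENNReal.ofReal (|c j|) * ‖u (t - (j:ℤ)) ω‖₊ with hF
  have hFmeas : Measurable F :=
    Measurable.ennreal_tsum (fun j => ((hmeas _).nnnorm.coe_nnreal_ennreal).const_mul _)
  have hFint : ∫⁻ ω, F ω ∂P ≠ ⊤ := by
    rw [hF]
    simp only
    rw [lintegral_tsum (fun j => (((hmeas _).nnnorm.coe_nnreal_ennreal).const_mul _).aemeasurable)]
    have : ∀ j : ℕ, ∫⁻ ω, ENNReal.ofReal (|c j|) * ‖u (t - (j:ℤ)) ω‖₊ ∂P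
        = ENNReal.ofReal (|c j|) * m := by
      intro j
      rw [lintegral_const_mul' _ _ ENNReal.ofReal_ne_top, hmom]
    rw [tsum_congr this, ENNReal.tsum_mul_right]
    refine ENNReal.mul_ne_top ?_ hm
    rw [← ENNReal.ofReal_tsum_of_nonneg (fun j => abs_nonneg _) hcsum]
    exact ENNReal.ofReal_ne_top
  have hae : ∀ᵐ ω ∂P, F ω < ⊤ := ae_lt_top hFmeas hFint
  filter_upwards [hae] with ω hω
  have hle : ∀ j : ℕ, (‖c j * u (t - (j:ℤ)) ω‖₊ : ℝ≥0∞)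
      ≤ ENNReal.ofReal (|c j|) * ‖u (t - (j:ℤ)) ω‖₊ := by
    intro j
    rw [nnnorm_mul, ENNReal.coe_mul, ← enorm_eq_nnnorm (c j), Real.enorm_eq_ofReal_abs]
  have hlt : ∑' j : ℕ, (‖c j * u (t - (j:ℤ)) ω‖₊ : ℝ≥0∞) ≠ ⊤ :=
    ne_top_of_le_ne_top hω.ne (ENNReal.tsum_le_tsum hle)
  exact Summable.of_nnnorm (ENNReal.tsum_coe_ne_top_iff_summable.mp hlt)

/-- The key edge-effect bound. -/
lemma hl_core (u : ℤ → Ω → ℝ) (hmeas : ∀ t, Measurable (u t)) (m : ℝ≥0∞) (hm : m ≠ ⊤)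
    (hmom : ∀ t, ∫⁻ ω, ‖u t ω‖₊ ∂P = m) (c : ℕ → ℝ) (K ρ : ℝ)
    (hK : 0 < K) (hρ₀ : 0 < ρ) (hρ₁ : ρ < 1) (hc : ∀ j, |c j| ≤ K * ρ ^ j) (T : ℕ) :
    ∫⁻ ω, ‖(∑ t ∈ Finset.range T, ∑' j : ℕ, c j * u ((t:ℤ) - (j:ℤ)) ω)
        - (∑' j : ℕ, c j) * ∑ t ∈ Finset.range T, u (t:ℤ) ω‖₊ ∂P
      ≤ ENNReal.ofReal (2 * K * (∑' j : ℕ, (j:ℝ) * ρ ^ j)) * m := by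
  have hgeom : Summable (fun j : ℕ => K * ρ ^ j) :=
    (summable_geometric_of_lt_one hρ₀.le hρ₁).mul_left K
  have hcsum : Summable (fun j => |c j|) :=
    hgeom.of_nonneg_of_le (fun j => abs_nonneg _) hc
  have hcsum' : Summable c := hcsum.of_abs
  -- the dominating function
  set A : ℕ → Ω → ℝ := fun j ω => ∑ i ∈ Finset.range j, u (-1 - (i:ℤ)) ω with hA
  set B : ℕ → Ω → ℝ := fun j ω => ∑ i ∈ Finset.range j, u ((T:ℤ) - 1 - (i:ℤ)) ω with hB
  set G : Ω → ℝ≥0∞ := fun ω => ∑' j : ℕ, ENNReal.ofReal (|c j|) *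
      ((∑ i ∈ Finset.range j, (‖u (-1 - (i:ℤ)) ω‖₊ : ℝ≥0∞))
        + ∑ i ∈ Finset.range j, (‖u ((T:ℤ) - 1 - (i:ℤ)) ω‖₊ : ℝ≥0∞)) with hG
  have hGmeas : Measurable G := by
    refine Measurable.ennreal_tsum (fun j => Measurable.const_mul (Measurable.add ?_ ?_) _) <;>
      exact Finset.measurable_sum _ (fun i _ => (hmeas _).nnnorm.coe_nnreal_ennreal)
  -- integral of the dominating function
  have hGint : ∫⁻ ω, G ω ∂P ≤ ENNReal.ofReal (2 * K * (∑' j : ℕ, (j:ℝ) * ρ ^ j)) * m := by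
    rw [hG]
    simp only
    rw [lintegral_tsum]
    swap
    · intro j
      refine (Measurable.const_mul (Measurable.add ?_ ?_) _).aemeasurable <;>
        exact Finset.measurable_sum _ (fun i _ => (hmeas _).nnnorm.coe_nnreal_ennreal)
    have hterm : ∀ j : ℕ, ∫⁻ ω, ENNReal.ofReal (|c j|) *
        ((∑ i ∈ Finset.range j, (‖u (-1 - (i:ℤ)) ω‖₊ : ℝ≥0∞))
          + ∑ i ∈ Finset.range j, (‖u ((T:ℤ) - 1 - (i:ℤ)) ω‖₊ : ℝ≥0∞)) ∂P
        = ENNReal.ofReal (|c j|) * ((2 * j : ℕ) * m) := by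
      intro j
      rw [lintegral_const_mul' _ _ ENNReal.ofReal_ne_top]
      congr 1
      rw [lintegral_add_left (Finset.measurable_sum _
        (fun i _ => (hmeas _).nnnorm.coe_nnreal_ennreal))]
      rw [lintegral_finset_sum _ (fun i _ => (hmeas _).nnnorm.coe_nnreal_ennreal),
        lintegral_finset_sum _ (fun i _ => (hmeas _).nnnorm.coe_nnreal_ennreal)]
      have h1 : ∀ i ∈ Finset.range j, ∫⁻ ω, (‖u (-1 - (i:ℤ)) ω‖₊ : ℝ≥0∞) ∂P = m :=
        fun i _ => hmom _
      have h2 : ∀ i ∈ Finset.range j, ∫⁻ ω, (‖u ((T:ℤ) - 1 - (i:ℤ)) ω‖₊ : ℝ≥0∞) ∂P = m :=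
        fun i _ => hmom _
      rw [Finset.sum_congr rfl h1, Finset.sum_congr rfl h2, Finset.sum_const,
        Finset.card_range, nsmul_eq_mul]
      push_cast
      ring
    rw [tsum_congr hterm]
    have hbd : ∀ j : ℕ, ENNReal.ofReal (|c j|) * ((2 * j : ℕ) * m)
        ≤ ENNReal.ofReal (2 * K * ((j:ℝ) * ρ ^ j)) * m := by
      intro j
      have h1 : ENNReal.ofReal (|c j|) ≤ ENNReal.ofReal (K * ρ ^ j) :=
        ENNReal.ofReal_le_ofReal (hc j)
      have h2 : ((2 * j : ℕ) : ℝ≥0∞) = ENNReal.ofReal ((2 * j : ℕ) : ℝ) :=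
        (ENNReal.ofReal_natCast _).symm
      calc ENNReal.ofReal (|c j|) * ((2 * j : ℕ) * m)
          ≤ ENNReal.ofReal (K * ρ ^ j) * ((2 * j : ℕ) * m) := by
            exact mul_le_mul_left h1 _
        _ = (ENNReal.ofReal (K * ρ ^ j) * ENNReal.ofReal ((2 * j : ℕ) : ℝ)) * m := by
            rw [h2]; ring
        _ = ENNReal.ofReal (2 * K * ((j:ℝ) * ρ ^ j)) * m := by
            rw [← ENNReal.ofReal_mul (by positivity)]
            congr 1
            push_cast
            ring
    refine le_trans (ENNReal.tsum_le_tsum hbd) ?_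
    rw [ENNReal.tsum_mul_right]
    refine mul_le_mul_left (le_of_eq ?_) m
    have hsum2 : Summable (fun j : ℕ => 2 * K * ((j:ℝ) * ρ ^ j)) := by
      have := summable_pow_mul_geometric_of_norm_lt_one (R := ℝ) 1
        (r := ρ) (by rwa [Real.norm_eq_abs, abs_of_pos hρ₀])
      simpa [pow_one] using this.mul_left (2 * K)
    rw [← ENNReal.ofReal_tsum_of_nonneg (fun j => by positivity) hsum2]
    congr 1
    rw [tsum_mul_left]
  -- almost-everywhere facts
  have haeS : ∀ᵐ ω ∂P, ∀ t : ℕ, Summable (fun j : ℕ => c j * u ((t:ℤ) - (j:ℤ)) ω) := by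
    rw [MeasureTheory.ae_all_iff]
    exact fun t => hl_ae_summable u hmeas m hm hmom c hcsum (t:ℤ)
  have haeG : ∀ᵐ ω ∂P, G ω < ⊤ := ae_lt_top hGmeas (lt_of_le_of_lt hGint
    (ENNReal.mul_lt_top ENNReal.ofReal_lt_top hm.lt_top)).ne
  -- pointwise bound on the good set
  have hptwise : ∀ᵐ ω ∂P,
      (‖(∑ t ∈ Finset.range T, ∑' j : ℕ, c j * u ((t:ℤ) - (j:ℤ)) ω)
        - (∑' j : ℕ, c j) * ∑ t ∈ Finset.range T, u (t:ℤ) ω‖₊ : ℝ≥0∞) ≤ G ω := by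
    filter_upwards [haeS, haeG] with ω hS hGω
    set S : ℝ := ∑ t ∈ Finset.range T, u (t:ℤ) ω with hSdef
    -- termwise domination of c j * (A j - B j) by the terms of G
    have hdom : ∀ j : ℕ, (‖c j * (A j ω - B j ω)‖₊ : ℝ≥0∞)
        ≤ ENNReal.ofReal (|c j|) *
          ((∑ i ∈ Finset.range j, (‖u (-1 - (i:ℤ)) ω‖₊ : ℝ≥0∞))
            + ∑ i ∈ Finset.range j, (‖u ((T:ℤ) - 1 - (i:ℤ)) ω‖₊ : ℝ≥0∞)) := by
      intro j
      rw [← enorm_eq_nnnorm (c j * (A j ω - B j ω)), ← ofReal_norm_eq_enorm]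
      have h1 : ‖c j * (A j ω - B j ω)‖ ≤ |c j| * (∑ i ∈ Finset.range j, |u (-1 - (i:ℤ)) ω|
          + ∑ i ∈ Finset.range j, |u ((T:ℤ) - 1 - (i:ℤ)) ω|) := by
        rw [Real.norm_eq_abs, abs_mul]
        refine mul_le_mul_of_nonneg_left ?_ (abs_nonneg _)
        refine le_trans (abs_sub _ _) (add_le_add ?_ ?_) <;>
          exact Finset.abs_sum_le_sum_abs _ _
      refine le_trans (ENNReal.ofReal_le_ofReal h1) ?_
      rw [ENNReal.ofReal_mul (abs_nonneg _), ENNReal.ofReal_add (by positivity) (by positivity)]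
      refine mul_le_mul_right (add_le_add (le_of_eq ?_) (le_of_eq ?_)) _ <;>
        · rw [ENNReal.ofReal_sum_of_nonneg (fun i _ => abs_nonneg _)]
          exact Finset.sum_congr rfl fun i _ => by
            rw [← Real.norm_eq_abs, ofReal_norm_eq_enorm, enorm_eq_nnnorm]
    -- summability of the difference terms
    have hsumd : Summable (fun j : ℕ => ‖c j * (A j ω - B j ω)‖₊) := by
      refine ENNReal.tsum_coe_ne_top_iff_summable.mp
        (ne_top_of_le_ne_top hGω.ne (ENNReal.tsum_le_tsum hdom))
    have hsumd' : Summable (fun j : ℕ => c j * (A j ω - B j ω)) := Summable.of_nnnorm hsumd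
    have hsumdn : Summable (fun j : ℕ => ‖c j * (A j ω - B j ω)‖) := by
      simpa [coe_nnnorm] using NNReal.summable_coe.mpr hsumd
    -- the identity
    have hkey : (∑ t ∈ Finset.range T, ∑' j : ℕ, c j * u ((t:ℤ) - (j:ℤ)) ω)
        - (∑' j : ℕ, c j) * S = ∑' j : ℕ, c j * (A j ω - B j ω) := by
      have e1 : ∑ t ∈ Finset.range T, ∑' j : ℕ, c j * u ((t:ℤ) - (j:ℤ)) ω
          = ∑' j : ℕ, ∑ t ∈ Finset.range T, c j * u ((t:ℤ) - (j:ℤ)) ω :=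
        (Summable.tsum_finsetSum (fun t _ => hS t)).symm
      have e2 : ∀ j : ℕ, ∑ t ∈ Finset.range T, c j * u ((t:ℤ) - (j:ℤ)) ω
          = c j * (S + A j ω - B j ω) := by
        intro j
        rw [← Finset.mul_sum]
        congr 1
        exact hl_sum_shift' (fun s => u s ω) T j
      have e3 : (∑' j : ℕ, c j) * S = ∑' j : ℕ, c j * S := by
        rw [tsum_mul_right]
      rw [e1, tsum_congr e2, e3]
      have hs1 : Summable (fun j : ℕ => c j * S) := hcsum'.mul_right S
      have hs2 : Summable (fun j : ℕ => c j * (S + A j ω - B j ω)) := by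
        have : (fun j : ℕ => c j * (S + A j ω - B j ω))
            = fun j : ℕ => c j * S + c j * (A j ω - B j ω) := by
          funext j; ring
        rw [this]
        exact hs1.add hsumd'
      rw [← Summable.tsum_sub hs2 hs1]
      exact tsum_congr fun j => by ring
    rw [hkey, ← enorm_eq_nnnorm, ← ofReal_norm_eq_enorm]
    refine le_trans (ENNReal.ofReal_le_ofReal (norm_tsum_le_tsum_norm hsumdn)) ?_
    rw [ENNReal.ofReal_tsum_of_nonneg (fun j => norm_nonneg _) hsumdn]
    refine le_trans (ENNReal.tsum_le_tsum (fun j => ?_)) le_rfl |>.trans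
      (le_of_eq rfl)
    · rw [ofReal_norm_eq_enorm, enorm_eq_nnnorm]
      exact hdom j
  calc ∫⁻ ω, ‖(∑ t ∈ Finset.range T, ∑' j : ℕ, c j * u ((t:ℤ) - (j:ℤ)) ω)
        - (∑' j : ℕ, c j) * ∑ t ∈ Finset.range T, u (t:ℤ) ω‖₊ ∂P
      ≤ ∫⁻ ω, G ω ∂P := lintegral_mono_ae hptwise
    _ ≤ _ := hGint

end Core

section Moments
variable {Ω : Type*} [MeasurableSpace Ω] {P : Measure Ω} [IsProbabilityMeasure P]

lemma hl_m2_finite {v : Ω → ℝ} (hv : Measurable v)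
    (hsq : Integrable (fun ω => (v ω) ^ 2) P) : ∫⁻ ω, ‖v ω‖₊ ∂P ≠ ⊤ := by
  have hpt : ∀ ω, (‖v ω‖₊ : ℝ≥0∞) ≤ 1 + ‖(v ω) ^ 2‖₊ := by
    intro ω
    rw [← enorm_eq_nnnorm (v ω), ← ofReal_norm_eq_enorm, ← enorm_eq_nnnorm (v ω ^ 2), ← ofReal_norm_eq_enorm]
    have h1 : ‖v ω‖ ≤ 1 + ‖(v ω) ^ 2‖ := by
      have habs : |v ω ^ 2| = v ω ^ 2 := abs_of_nonneg (sq_nonneg _)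
      rw [Real.norm_eq_abs, Real.norm_eq_abs, habs]
      rcases le_or_gt (|v ω|) 1 with h | h
      · nlinarith [sq_nonneg (v ω)]
      · nlinarith [sq_abs (v ω)]
    calc ENNReal.ofReal ‖v ω‖ ≤ ENNReal.ofReal (1 + ‖(v ω) ^ 2‖) :=
          ENNReal.ofReal_le_ofReal h1
      _ = 1 + ENNReal.ofReal ‖(v ω) ^ 2‖ := by
          rw [ENNReal.ofReal_add zero_le_one (norm_nonneg _)]; simp
  have h2 : ∫⁻ ω, (‖v ω‖₊ : ℝ≥0∞) ∂P < ⊤ := by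
    calc ∫⁻ ω, (‖v ω‖₊ : ℝ≥0∞) ∂P ≤ ∫⁻ ω, ((1:ℝ≥0∞) + ‖(v ω) ^ 2‖₊) ∂P := lintegral_mono hpt
      _ = 1 * P Set.univ + ∫⁻ ω, (‖(v ω) ^ 2‖₊ : ℝ≥0∞) ∂P := by
          rw [lintegral_add_left measurable_const, lintegral_const]
      _ < ⊤ := by
          refine ENNReal.add_lt_top.mpr ⟨?_, hsq.2⟩
          simp [measure_lt_top]
  exact h2.ne

lemma hl_m1_finite {v : Ω → ℝ} (hv : Measurable v) {α C : ℝ} (hα₁ : 1 < α) (hC : 0 < C)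
    (htail : Tendsto (fun x : ℝ => x ^ α * (P {ω | |v ω| > x}).toReal) atTop (𝓝 C)) :
    ∫⁻ ω, ‖v ω‖₊ ∂P ≠ ⊤ := by
  have h1 : ∀ᶠ x in atTop, x ^ α * (P {ω | |v ω| > x}).toReal < C + 1 :=
    htail.eventually_lt_const (by linarith)
  obtain ⟨x₁, hx₁⟩ := eventually_atTop.mp h1
  set x₀ : ℝ := max x₁ 1 with hx₀def
  have hx₀1 : (1:ℝ) ≤ x₀ := le_max_right _ _
  have hx₀0 : (0:ℝ) < x₀ := lt_of_lt_of_le one_pos hx₀1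
  have key : ∀ x : ℝ, x₀ ≤ x → P {ω | x < |v ω|} ≤ ENNReal.ofReal ((C+1) * x ^ (-α)) := by
    intro x hx
    have hxpos : (0:ℝ) < x := lt_of_lt_of_le hx₀0 hx
    have hb := hx₁ x (le_trans (le_max_left _ _) hx)
    have hid : x ^ α * x ^ (-α) = 1 := by
      rw [← Real.rpow_add hxpos]; simp
    have hrnn : (0:ℝ) ≤ x ^ (-α) := Real.rpow_nonneg hxpos.le _
    have ht : (P {ω | x < |v ω|}).toReal ≤ (C+1) * x ^ (-α) := by
      calc (P {ω | x < |v ω|}).toReal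
          = (x ^ α * x ^ (-α)) * (P {ω | x < |v ω|}).toReal := by rw [hid, one_mul]
        _ = (x ^ α * (P {ω | x < |v ω|}).toReal) * x ^ (-α) := by ring
        _ ≤ (C+1) * x ^ (-α) := mul_le_mul_of_nonneg_right hb.le hrnn
    refine (ENNReal.le_ofReal_iff_toReal_le (measure_ne_top P _) (by positivity)).mpr ht
  have hlc : ∫⁻ ω, (‖v ω‖₊ : ℝ≥0∞) ∂P = ∫⁻ t in Set.Ioi (0:ℝ), P {a | t < |v a|} := by
    have heq : ∫⁻ ω, (‖v ω‖₊ : ℝ≥0∞) ∂P = ∫⁻ ω, ENNReal.ofReal (|v ω|) ∂P := by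
      refine lintegral_congr fun ω => ?_
      rw [← enorm_eq_nnnorm, ← ofReal_norm_eq_enorm, Real.norm_eq_abs]
    rw [heq]
    exact MeasureTheory.lintegral_eq_lintegral_meas_lt P
      (ae_of_all _ fun ω => abs_nonneg _) hv.abs.aemeasurable
  rw [hlc]
  have hsplit : (Set.Ioi (0:ℝ)) = Set.Ioc 0 x₀ ∪ Set.Ioi x₀ :=
    (Set.Ioc_union_Ioi_eq_Ioi hx₀0.le).symm
  rw [hsplit, lintegral_union measurableSet_Ioi (Set.Ioc_disjoint_Ioi le_rfl)]
  have hfin1 : ∫⁻ t in Set.Ioc (0:ℝ) x₀, P {a | t < |v a|} < ⊤ := by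
    calc ∫⁻ t in Set.Ioc (0:ℝ) x₀, P {a | t < |v a|}
        ≤ ∫⁻ _ in Set.Ioc (0:ℝ) x₀, 1 :=
          setLIntegral_mono' measurableSet_Ioc (fun t _ => prob_le_one)
      _ = ENNReal.ofReal x₀ := by
          rw [setLIntegral_one]
          simp [Real.volume_Ioc]
      _ < ⊤ := ENNReal.ofReal_lt_top
  have hfin2 : ∫⁻ t in Set.Ioi x₀, P {a | t < |v a|} < ⊤ := by
    have hInt : IntegrableOn (fun t : ℝ => (C+1) * t ^ (-α)) (Set.Ioi x₀) volume :=
      (integrableOn_Ioi_rpow_of_lt (by linarith) hx₀0).const_mul (C+1)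
    calc ∫⁻ t in Set.Ioi x₀, P {a | t < |v a|}
        ≤ ∫⁻ t in Set.Ioi x₀, ENNReal.ofReal ((C+1) * t ^ (-α)) :=
          setLIntegral_mono' measurableSet_Ioi (fun t ht => key t (le_of_lt ht))
      _ ≤ ∫⁻ t in Set.Ioi x₀, (‖(C+1) * t ^ (-α)‖₊ : ℝ≥0∞) := by
          refine lintegral_mono fun t => ?_
          rw [← enorm_eq_nnnorm, ← ofReal_norm_eq_enorm, Real.norm_eq_abs]
          exact ENNReal.ofReal_le_ofReal (le_abs_self _)
      _ < ⊤ := hInt.2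
  exact (ENNReal.add_lt_top.mpr ⟨hfin1, hfin2⟩).ne

end Moments

lemma hl_slutsky
    {Ω : Type*} [MeasurableSpace Ω] {P : Measure Ω} [IsProbabilityMeasure P]
    (S1 S2 : ℕ → Ω → ℝ) (hS1 : ∀ T, Measurable (S1 T)) (hS2 : ∀ T, Measurable (S2 T))
    (Su Nu : Ω → ℝ) (hSu : Measurable Su) (hNu : Measurable Nu)
    (hjoint : ∀ g : (ℝ × ℝ) →ᵇ ℝ, Tendsto (fun T : ℕ => ∫ ω, g (S1 T ω, S2 T ω) ∂P) atTop
      (𝓝 (∫ ω, g (Su ω, Nu ω) ∂P)))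
    (a b : ℝ) (aT bT : ℕ → ℝ) (ha : Tendsto aT atTop (𝓝 a)) (hb : Tendsto bT atTop (𝓝 b))
    (X : ℕ → Ω → ℝ) (hX : ∀ T, Measurable (X T))
    (hR : Tendsto (fun T => ∫⁻ ω, ‖X T ω - (aT T * S1 T ω + bT T * S2 T ω)‖₊ ∂P) atTop (𝓝 0))
    (f : ℝ →ᵇ ℝ) :
    Tendsto (fun T : ℕ => ∫ ω, f (X T ω) ∂P) atTop
      (𝓝 (∫ ω, f (a * Su ω + b * Nu ω) ∂P)) := by
  set g : (ℝ × ℝ) →ᵇ ℝ :=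
    f.compContinuous ⟨fun p : ℝ × ℝ => a * p.1 + b * p.2, by fun_prop⟩ with hgdef
  have hgapp : ∀ x y : ℝ, g (x, y) = f (a * x + b * y) := fun _ _ => rfl
  have hgl : Tendsto (fun T : ℕ => ∫ ω, g (S1 T ω, S2 T ω) ∂P) atTop
      (𝓝 (∫ ω, f (a * Su ω + b * Nu ω) ∂P)) := by
    have := hjoint g
    simpa only [hgapp] using this
  suffices hdiff : Tendsto (fun T : ℕ =>
      (∫ ω, f (X T ω) ∂P) - ∫ ω, g (S1 T ω, S2 T ω) ∂P) atTop (𝓝 0) by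
    have := hdiff.add hgl
    simpa using this
  rw [NormedAddCommGroup.tendsto_nhds_zero]
  intro ε hε
  set B : ℝ := ‖f‖ with hBdef
  have hB : 0 ≤ B := norm_nonneg f
  set ε' : ℝ := ε / (20 * (B + 1)) with hε'def
  have hε' : 0 < ε' := by positivity
  -- Step 1: choose M from tightness of the limit
  have hofε' : (0 : ℝ≥0∞) < ENNReal.ofReal ε' := ENNReal.ofReal_pos.mpr hε'
  have hTs := (hl_tail_tendsto (P := P) hSu).eventually_lt_const hofε'
  have hTn := (hl_tail_tendsto (P := P) hNu).eventually_lt_const hofε'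
  obtain ⟨n, hn1, hn2⟩ := (hTs.and hTn).exists
  set M : ℝ := (n : ℝ) + 1 with hMdef
  have hM1 : 1 ≤ M := by
    have : (0:ℝ) ≤ (n:ℝ) := Nat.cast_nonneg n
    rw [hMdef]; linarith
  have hM0 : 0 < M := lt_of_lt_of_le one_pos hM1
  have hMsub : M - 1 = (n : ℝ) := by ring
  have hMs : (P {ω | M - 1 ≤ |Su ω|}).toReal ≤ ε' := by
    rw [hMsub]
    exact ENNReal.toReal_le_of_le_ofReal hε'.le hn1.le
  have hMn : (P {ω | M - 1 ≤ |Nu ω|}).toReal ≤ ε' := by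
    rw [hMsub]
    exact ENNReal.toReal_le_of_le_ofReal hε'.le hn2.le
  -- Step 2: uniform continuity on a compact interval
  set Mbig : ℝ := (|a| + |b|) * M + 1 with hMbigdef
  have hMbig0 : 0 < Mbig := by positivity
  have hUC : UniformContinuousOn f (Set.Icc (-Mbig) Mbig) :=
    isCompact_Icc.uniformContinuousOn_of_continuous f.continuous.continuousOn
  rw [Metric.uniformContinuousOn_iff] at hUC
  obtain ⟨δ₀, hδ₀, hδ⟩ := hUC (ε / 4) (by positivity)
  set δ : ℝ := min δ₀ 1 with hδdef
  have hδpos : 0 < δ := lt_min hδ₀ one_pos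
  have hδ1 : δ ≤ 1 := min_le_right _ _
  have hδδ₀ : δ ≤ δ₀ := min_le_left _ _
  -- Step 3: eventual events
  -- E1 : tail bound for S1
  have E1 : ∀ᶠ T in atTop, (P {ω | M ≤ |S1 T ω|}).toReal < 2 * ε' := by
    set G1 : (ℝ × ℝ) →ᵇ ℝ := (hlBump M).compContinuous ⟨Prod.fst, continuous_fst⟩ with hG1
    have happ1 : ∀ T, (∫ ω, G1 (S1 T ω, S2 T ω) ∂P) = ∫ ω, hlBump M (S1 T ω) ∂P := fun T => rfl
    have happ2 : (∫ ω, G1 (Su ω, Nu ω) ∂P) = ∫ ω, hlBump M (Su ω) ∂P := rfl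
    have hle : (∫ ω, G1 (Su ω, Nu ω) ∂P) < 2 * ε' := by
      rw [happ2]
      calc ∫ ω, hlBump M (Su ω) ∂P ≤ (P {ω | M - 1 ≤ |Su ω|}).toReal :=
            hl_integral_bump_le hSu M
        _ ≤ ε' := hMs
        _ < 2 * ε' := by linarith
    have := (hjoint G1).eventually_lt_const hle
    filter_upwards [this] with T hT
    calc (P {ω | M ≤ |S1 T ω|}).toReal ≤ ∫ ω, hlBump M (S1 T ω) ∂P :=
          hl_meas_le_integral_bump (hS1 T) M
      _ = ∫ ω, G1 (S1 T ω, S2 T ω) ∂P := (happ1 T).symm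
      _ < 2 * ε' := hT
  -- E2 : tail bound for S2
  have E2 : ∀ᶠ T in atTop, (P {ω | M ≤ |S2 T ω|}).toReal < 2 * ε' := by
    set G2 : (ℝ × ℝ) →ᵇ ℝ := (hlBump M).compContinuous ⟨Prod.snd, continuous_snd⟩ with hG2
    have happ1 : ∀ T, (∫ ω, G2 (S1 T ω, S2 T ω) ∂P) = ∫ ω, hlBump M (S2 T ω) ∂P := fun T => rfl
    have happ2 : (∫ ω, G2 (Su ω, Nu ω) ∂P) = ∫ ω, hlBump M (Nu ω) ∂P := rfl
    have hle : (∫ ω, G2 (Su ω, Nu ω) ∂P) < 2 * ε' := by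
      rw [happ2]
      calc ∫ ω, hlBump M (Nu ω) ∂P ≤ (P {ω | M - 1 ≤ |Nu ω|}).toReal :=
            hl_integral_bump_le hNu M
        _ ≤ ε' := hMn
        _ < 2 * ε' := by linarith
    have := (hjoint G2).eventually_lt_const hle
    filter_upwards [this] with T hT
    calc (P {ω | M ≤ |S2 T ω|}).toReal ≤ ∫ ω, hlBump M (S2 T ω) ∂P :=
          hl_meas_le_integral_bump (hS2 T) M
      _ = ∫ ω, G2 (S1 T ω, S2 T ω) ∂P := (happ1 T).symm
      _ < 2 * ε' := hT
  -- E3 : the remainder is small in probability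
  have E3 : ∀ᶠ T in atTop,
      (P {ω | δ/4 ≤ |X T ω - (aT T * S1 T ω + bT T * S2 T ω)|}).toReal ≤ ε' := by
    have hpos : (0:ℝ≥0∞) < ENNReal.ofReal (δ/4) * ENNReal.ofReal ε' := by
      apply ENNReal.mul_pos <;> simp [ENNReal.ofReal_pos] <;> positivity
    filter_upwards [hR.eventually_lt_const hpos] with T hT
    set R : Ω → ℝ := fun ω => X T ω - (aT T * S1 T ω + bT T * S2 T ω) with hRdef
    have hRmeas : Measurable R :=
      (hX T).sub (((hS1 T).const_mul _).add ((hS2 T).const_mul _))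
    have hsetEq : {ω | ENNReal.ofReal (δ/4) ≤ (‖R ω‖₊ : ℝ≥0∞)} = {ω | δ/4 ≤ |R ω|} := by
      ext ω
      simp only [Set.mem_setOf_eq, ← enorm_eq_nnnorm, ← ofReal_norm_eq_enorm, Real.norm_eq_abs]
      exact ENNReal.ofReal_le_ofReal_iff (abs_nonneg _)
    have hmark := MeasureTheory.meas_ge_le_lintegral_div
      (μ := P) (f := fun ω => (‖R ω‖₊ : ℝ≥0∞))
      (hRmeas.nnnorm.coe_nnreal_ennreal).aemeasurable
      (ε := ENNReal.ofReal (δ/4)) (by simp [ENNReal.ofReal_pos]; positivity) ENNReal.ofReal_ne_top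
    rw [hsetEq] at hmark
    have hfinal : P {ω | δ/4 ≤ |R ω|} ≤ ENNReal.ofReal ε' := by
      refine le_trans hmark ?_
      rw [ENNReal.div_le_iff_le_mul (Or.inl (by simp [ENNReal.ofReal_pos]; positivity))
        (Or.inl ENNReal.ofReal_ne_top)]
      calc ∫⁻ ω, (‖R ω‖₊ : ℝ≥0∞) ∂P ≤ ENNReal.ofReal (δ/4) * ENNReal.ofReal ε' := hT.le
        _ ≤ ENNReal.ofReal ε' * ENNReal.ofReal (δ/4) := by rw [mul_comm]
    exact ENNReal.toReal_le_of_le_ofReal hε'.le hfinal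
  -- E4 : coefficient convergence
  have E4a : ∀ᶠ T in atTop, |aT T - a| < δ/(8*M) := by
    have := Metric.tendsto_nhds.mp ha (δ/(8*M)) (by positivity)
    filter_upwards [this] with T hT
    rwa [Real.dist_eq] at hT
  have E4b : ∀ᶠ T in atTop, |bT T - b| < δ/(8*M) := by
    have := Metric.tendsto_nhds.mp hb (δ/(8*M)) (by positivity)
    filter_upwards [this] with T hT
    rwa [Real.dist_eq] at hT
  -- Combine
  filter_upwards [E1, E2, E3, E4a, E4b] with T h1 h2 h3 h4 h5
  set R : Ω → ℝ := fun ω => X T ω - (aT T * S1 T ω + bT T * S2 T ω) with hRdef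
  have hRmeas : Measurable R :=
    (hX T).sub (((hS1 T).const_mul _).add ((hS2 T).const_mul _))
  set bad : Set Ω := {ω | M ≤ |S1 T ω|} ∪ {ω | M ≤ |S2 T ω|} ∪ {ω | δ/4 ≤ |R ω|} with hbaddef
  have hbadmeas : MeasurableSet bad := by
    refine MeasurableSet.union (MeasurableSet.union ?_ ?_) ?_
    · exact measurableSet_le measurable_const (hS1 T).abs
    · exact measurableSet_le measurable_const (hS2 T).abs
    · exact measurableSet_le measurable_const hRmeas.abs
  have hPbad : (P bad).toReal ≤ 5 * ε' := by
    have hsub : P bad ≤ P {ω | M ≤ |S1 T ω|} + P {ω | M ≤ |S2 T ω|} + P {ω | δ/4 ≤ |R ω|} :=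
      le_trans (measure_union_le _ _) (add_le_add_left (measure_union_le _ _) _)
    calc (P bad).toReal
        ≤ (P {ω | M ≤ |S1 T ω|} + P {ω | M ≤ |S2 T ω|} + P {ω | δ/4 ≤ |R ω|}).toReal := by
          refine ENNReal.toReal_mono ?_ hsub
          finiteness
      _ = (P {ω | M ≤ |S1 T ω|}).toReal + (P {ω | M ≤ |S2 T ω|}).toReal
            + (P {ω | δ/4 ≤ |R ω|}).toReal := by
          rw [ENNReal.toReal_add, ENNReal.toReal_add] <;> finiteness
      _ ≤ 2 * ε' + 2 * ε' + ε' := by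
          have := h1.le; have := h2.le
          linarith
      _ = 5 * ε' := by ring
  -- pointwise bound
  have hpt : ∀ ω, |f (X T ω) - g (S1 T ω, S2 T ω)|
      ≤ ε/4 + (2*B) * Set.indicator bad (fun _ => (1:ℝ)) ω := by
    intro ω
    by_cases hω : ω ∈ bad
    · rw [Set.indicator_of_mem hω]
      have hb1 : |f (X T ω)| ≤ B := by
        have := f.norm_coe_le_norm (X T ω); rwa [Real.norm_eq_abs] at this
      have hb2 : |g (S1 T ω, S2 T ω)| ≤ B := by
        rw [hgapp]
        have := f.norm_coe_le_norm (a * S1 T ω + b * S2 T ω)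
        rwa [Real.norm_eq_abs] at this
      have := abs_sub (f (X T ω)) (g (S1 T ω, S2 T ω))
      have hε4 : (0:ℝ) ≤ ε/4 := by positivity
      linarith
    · rw [Set.indicator_of_notMem hω, mul_zero, add_zero]
      simp only [hbaddef, Set.mem_union, Set.mem_setOf_eq, not_or, not_le] at hω
      obtain ⟨⟨hg1, hg2⟩, hg3⟩ := hω
      set w : ℝ := a * S1 T ω + b * S2 T ω with hwdef
      have hgw : g (S1 T ω, S2 T ω) = f w := hgapp _ _
      have hwK : w ∈ Set.Icc (-Mbig) Mbig := by
        rw [Set.mem_Icc, ← abs_le]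
        calc |w| ≤ |a| * |S1 T ω| + |b| * |S2 T ω| := by
              rw [hwdef]
              refine le_trans (abs_add_le _ _) (add_le_add (le_of_eq (abs_mul _ _))
                (le_of_eq (abs_mul _ _)))
          _ ≤ |a| * M + |b| * M := by
              have := abs_nonneg a; have := abs_nonneg b
              have := hg1.le; have := hg2.le
              nlinarith
          _ ≤ Mbig := by rw [hMbigdef]; nlinarith [abs_nonneg a, abs_nonneg b]
      have hXw : |X T ω - w| ≤ δ/2 := by
        have hX_eq : X T ω = aT T * S1 T ω + bT T * S2 T ω + R ω := by
          rw [hRdef]; ring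
        have : X T ω - w = (aT T - a) * S1 T ω + (bT T - b) * S2 T ω + R ω := by
          rw [hX_eq, hwdef]; ring
        rw [this]
        have e1 : |(aT T - a) * S1 T ω| ≤ δ/8 := by
          rw [abs_mul]
          calc |aT T - a| * |S1 T ω| ≤ (δ/(8*M)) * M := by
                have := abs_nonneg (aT T - a)
                nlinarith [hg1.le, h4.le, abs_nonneg (S1 T ω)]
            _ = δ/8 := by field_simp
        have e2 : |(bT T - b) * S2 T ω| ≤ δ/8 := by
          rw [abs_mul]
          calc |bT T - b| * |S2 T ω| ≤ (δ/(8*M)) * M := by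
                have := abs_nonneg (bT T - b)
                nlinarith [hg2.le, h5.le, abs_nonneg (S2 T ω)]
            _ = δ/8 := by field_simp
        calc |(aT T - a) * S1 T ω + (bT T - b) * S2 T ω + R ω|
            ≤ |(aT T - a) * S1 T ω| + |(bT T - b) * S2 T ω| + |R ω| := by
              refine le_trans (abs_add_le _ _) ?_
              exact add_le_add (abs_add_le _ _) le_rfl
          _ ≤ δ/8 + δ/8 + δ/4 := add_le_add (add_le_add e1 e2) hg3.le
          _ = δ/2 := by ring
      have hXK : X T ω ∈ Set.Icc (-Mbig) Mbig := by
        rw [Set.mem_Icc, ← abs_le]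
        have h1' : |X T ω| ≤ |w| + δ/2 := by
          have : X T ω = w + (X T ω - w) := by ring
          calc |X T ω| = |w + (X T ω - w)| := by rw [← this]
            _ ≤ |w| + |X T ω - w| := abs_add_le _ _
            _ ≤ |w| + δ/2 := by linarith
        have h2' : |w| ≤ (|a| + |b|) * M := by
          rw [Set.mem_Icc, ← abs_le] at hwK
          calc |w| ≤ |a| * |S1 T ω| + |b| * |S2 T ω| := by
                rw [hwdef]
                refine le_trans (abs_add_le _ _) (add_le_add (le_of_eq (abs_mul _ _))
                  (le_of_eq (abs_mul _ _)))
            _ ≤ (|a| + |b|) * M := by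
                nlinarith [abs_nonneg a, abs_nonneg b, hg1.le, hg2.le]
        rw [hMbigdef]
        linarith
      have hdist : dist (X T ω) w < δ₀ := by
        rw [Real.dist_eq]
        calc |X T ω - w| ≤ δ/2 := hXw
          _ < δ := by linarith
          _ ≤ δ₀ := hδδ₀
      have := hδ (X T ω) hXK w hwK hdist
      rw [Real.dist_eq] at this
      rw [hgw]
      linarith
  -- integrate the pointwise bound
  have hint1 : Integrable (fun ω => f (X T ω)) P := hl_integrable_comp f (hX T).aemeasurable
  have hint2 : Integrable (fun ω => g (S1 T ω, S2 T ω)) P := by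
    refine hl_integrable_of_bdd
      (g.continuous.measurable.comp ((hS1 T).prodMk (hS2 T))).aestronglyMeasurable
      (C := ‖g‖) (fun ω => ?_)
    have := g.norm_coe_le_norm (S1 T ω, S2 T ω)
    rwa [Real.norm_eq_abs] at this
  have hint3 : Integrable (fun ω => ε/4 + (2*B) * Set.indicator bad (fun _ => (1:ℝ)) ω) P := by
    refine (integrable_const (ε/4)).add ?_
    exact (((integrable_const (1:ℝ)).indicator hbadmeas).const_mul (2*B))
  have hintegral : ∫ ω, (ε/4 + (2*B) * Set.indicator bad (fun _ => (1:ℝ)) ω) ∂P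
      = ε/4 + (2*B) * (P bad).toReal := by
    rw [integral_add (integrable_const _)
      (((integrable_const (1:ℝ)).indicator hbadmeas).const_mul (2*B))]
    rw [integral_const]
    simp only [Measure.real, measure_univ, ENNReal.toReal_one, one_smul]
    congr 1
    rw [MeasureTheory.integral_const_mul, MeasureTheory.integral_indicator_const _ hbadmeas]
    simp [Measure.real]
  calc ‖(∫ ω, f (X T ω) ∂P) - ∫ ω, g (S1 T ω, S2 T ω) ∂P‖
      = ‖∫ ω, (f (X T ω) - g (S1 T ω, S2 T ω)) ∂P‖ := by
        rw [integral_sub hint1 hint2]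
    _ ≤ ∫ ω, ‖f (X T ω) - g (S1 T ω, S2 T ω)‖ ∂P := norm_integral_le_integral_norm _
    _ ≤ ∫ ω, (ε/4 + (2*B) * Set.indicator bad (fun _ => (1:ℝ)) ω) ∂P := by
        refine integral_mono (hint1.sub hint2).norm hint3 ?_
        intro ω
        simp only [Real.norm_eq_abs]
        exact hpt ω
    _ = ε/4 + (2*B) * (P bad).toReal := hintegral
    _ < ε := by
        have hq : ε' * (20 * (B + 1)) = ε := div_mul_cancel₀ _ (by positivity)
        have hle : (2*B) * (P bad).toReal ≤ (2*B) * (5*ε') :=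
          mul_le_mul_of_nonneg_left hPbad (by positivity)
        nlinarith [mul_nonneg hB hε'.le]


/-- Sample-mean convergence for the finite-variance variable in the heavy-light model:
`T^{-1/2} Σ_t Y_{t2}` converges in distribution to
`(Σ_j c*_{j,21}) S_u + (Σ_j c*_{j,22}) N_u`. -/
theorem hl_sample_mean_convergence
    {Ω : Type*} [MeasurableSpace Ω] (P : Measure Ω) [IsProbabilityMeasure P]
    (u1 u2 : ℤ → Ω → ℝ) (hmeas1 : ∀ t, Measurable (u1 t)) (hmeas2 : ∀ t, Measurable (u2 t))
    (hiid : iIndepFun (fun t ω => (u1 t ω, u2 t ω)) P)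
    (hident : ∀ t : ℤ, Measure.map (fun ω => (u1 t ω, u2 t ω)) P =
      Measure.map (fun ω => (u1 0 ω, u2 0 ω)) P)
    (hcomp : ∀ t, IndepFun (u1 t) (u2 t) P)
    (α C : ℝ) (hα₁ : 1 < α) (hα₂ : α < 2) (hC : 0 < C)
    (htail : Tendsto (fun x : ℝ => x ^ α * (P {ω | |u1 0 ω| > x}).toReal) atTop (𝓝 C))
    (hmean1 : ∫ ω, u1 0 ω ∂P = 0) (hmean2 : ∫ ω, u2 0 ω ∂P = 0)
    (hvar2 : ∫ ω, (u2 0 ω) ^ 2 ∂P = 1)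
    (θ : ℝ) (hθ : θ = 1 / α - 1 / 2)
    -- joint convergence in distribution of the normalized partial sums to (S_u, N_u)
    (Su Nu : Ω → ℝ) (hSu : Measurable Su) (hNu : Measurable Nu)
    (hSuNu : IndepFun Su Nu P)
    (hjoint : ∀ f : (ℝ × ℝ) →ᵇ ℝ,
      Tendsto (fun T : ℕ =>
          ∫ ω, f ((T : ℝ) ^ (-(1 / α)) * ∑ t ∈ Finset.range T, u1 (t : ℤ) ω,
                  (T : ℝ) ^ (-(1 / 2 : ℝ)) * ∑ t ∈ Finset.range T, u2 (t : ℤ) ω) ∂P)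
        atTop (𝓝 (∫ ω, f (Su ω, Nu ω) ∂P)))
    -- coefficients, their limits, and uniform exponential decay
    (c21 c22 : ℕ → ℕ → ℝ) (c21s c22s : ℕ → ℝ)
    (hlim21 : ∀ j, Tendsto (fun T => c21 T j) atTop (𝓝 (c21s j)))
    (hlim22 : ∀ j, Tendsto (fun T => c22 T j) atTop (𝓝 (c22s j)))
    (K ρ : ℝ) (hK : 0 < K) (hρ₀ : 0 < ρ) (hρ₁ : ρ < 1)
    (hdecay21 : ∀ T j, |c21 T j| ≤ K * ρ ^ j)
    (hdecay22 : ∀ T j, |c22 T j| ≤ K * ρ ^ j) :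
    ∀ f : ℝ →ᵇ ℝ,
      Tendsto (fun T : ℕ =>
          ∫ ω, f ((T : ℝ) ^ (-(1 / 2 : ℝ)) *
            ∑ t ∈ Finset.range T,
              ((T : ℝ) ^ (-θ) * ∑' j : ℕ, c21 T j * u1 ((t : ℤ) - (j : ℤ)) ω +
                ∑' j : ℕ, c22 T j * u2 ((t : ℤ) - (j : ℤ)) ω)) ∂P)
        atTop
        (𝓝 (∫ ω, f ((∑' j : ℕ, c21s j) * Su ω + (∑' j : ℕ, c22s j) * Nu ω) ∂P)) := by
  intro f
  -- basic setup
  have hpair : ∀ t : ℤ, Measurable (fun ω => (u1 t ω, u2 t ω)) :=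
    fun t => (hmeas1 t).prodMk (hmeas2 t)
  set m1 : ℝ≥0∞ := ∫⁻ ω, ‖u1 0 ω‖₊ ∂P with hm1def
  set m2 : ℝ≥0∞ := ∫⁻ ω, ‖u2 0 ω‖₊ ∂P with hm2def
  have hm1 : m1 ≠ ⊤ := hl_m1_finite (hmeas1 0) hα₁ hC htail
  have hsqInt : Integrable (fun ω => (u2 0 ω) ^ 2) P := by
    by_contra h
    rw [MeasureTheory.integral_undef h] at hvar2
    norm_num at hvar2
  have hm2 : m2 ≠ ⊤ := hl_m2_finite (hmeas2 0) hsqInt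
  have hmom1 : ∀ t : ℤ, ∫⁻ ω, ‖u1 t ω‖₊ ∂P = m1 := by
    intro t
    have e1 : ∫⁻ ω, ‖u1 t ω‖₊ ∂P
        = ∫⁻ p : ℝ × ℝ, ‖p.1‖₊ ∂(Measure.map (fun ω => (u1 t ω, u2 t ω)) P) :=
      (lintegral_map (measurable_fst.nnnorm.coe_nnreal_ennreal) (hpair t)).symm
    rw [e1, hident t, lintegral_map (measurable_fst.nnnorm.coe_nnreal_ennreal) (hpair 0), hm1def]
  have hmom2 : ∀ t : ℤ, ∫⁻ ω, ‖u2 t ω‖₊ ∂P = m2 := by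
    intro t
    have e1 : ∫⁻ ω, ‖u2 t ω‖₊ ∂P
        = ∫⁻ p : ℝ × ℝ, ‖p.2‖₊ ∂(Measure.map (fun ω => (u1 t ω, u2 t ω)) P) :=
      (lintegral_map (measurable_snd.nnnorm.coe_nnreal_ennreal) (hpair t)).symm
    rw [e1, hident t, lintegral_map (measurable_snd.nnnorm.coe_nnreal_ennreal) (hpair 0), hm2def]
  -- coefficient facts
  have hgeoK : Summable (fun j : ℕ => K * ρ ^ j) :=
    (summable_geometric_of_lt_one hρ₀.le hρ₁).mul_left K
  have hdec21 : ∀ T, Summable (fun j => |c21 T j|) :=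
    fun T => hgeoK.of_nonneg_of_le (fun j => abs_nonneg _) (hdecay21 T)
  have hdec22 : ∀ T, Summable (fun j => |c22 T j|) :=
    fun T => hgeoK.of_nonneg_of_le (fun j => abs_nonneg _) (hdecay22 T)
  have ha : Tendsto (fun T : ℕ => ∑' j : ℕ, c21 T j) atTop (𝓝 (∑' j : ℕ, c21s j)) :=
    tendsto_tsum_of_dominated_convergence hgeoK hlim21
      (Eventually.of_forall fun T j => by rw [Real.norm_eq_abs]; exact hdecay21 T j)
  have hb : Tendsto (fun T : ℕ => ∑' j : ℕ, c22 T j) atTop (𝓝 (∑' j : ℕ, c22s j)) :=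
    tendsto_tsum_of_dominated_convergence hgeoK hlim22
      (Eventually.of_forall fun T j => by rw [Real.norm_eq_abs]; exact hdecay22 T j)
  -- a.e. summability and a.e.-measurability of the moving averages
  have haesum1 : ∀ (T : ℕ) (t : ℤ), ∀ᵐ ω ∂P, Summable (fun j : ℕ => c21 T j * u1 (t - (j:ℤ)) ω) :=
    fun T t => hl_ae_summable u1 hmeas1 m1 hm1 hmom1 (c21 T) (hdec21 T) t
  have haesum2 : ∀ (T : ℕ) (t : ℤ), ∀ᵐ ω ∂P, Summable (fun j : ℕ => c22 T j * u2 (t - (j:ℤ)) ω) :=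
    fun T t => hl_ae_summable u2 hmeas2 m2 hm2 hmom2 (c22 T) (hdec22 T) t
  have haemeas1 : ∀ (T : ℕ) (t : ℤ),
      AEMeasurable (fun ω => ∑' j : ℕ, c21 T j * u1 (t - (j:ℤ)) ω) P := by
    intro T t
    refine aemeasurable_of_tendsto_metrizable_ae atTop
      (f := fun n ω => ∑ j ∈ Finset.range n, c21 T j * u1 (t - (j:ℤ)) ω)
      (fun n => (Finset.measurable_sum _ (fun j _ => (hmeas1 _).const_mul _)).aemeasurable) ?_
    filter_upwards [haesum1 T t] with ω hω
    exact hω.hasSum.tendsto_sum_nat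
  have haemeas2 : ∀ (T : ℕ) (t : ℤ),
      AEMeasurable (fun ω => ∑' j : ℕ, c22 T j * u2 (t - (j:ℤ)) ω) P := by
    intro T t
    refine aemeasurable_of_tendsto_metrizable_ae atTop
      (f := fun n ω => ∑ j ∈ Finset.range n, c22 T j * u2 (t - (j:ℤ)) ω)
      (fun n => (Finset.measurable_sum _ (fun j _ => (hmeas2 _).const_mul _)).aemeasurable) ?_
    filter_upwards [haesum2 T t] with ω hω
    exact hω.hasSum.tendsto_sum_nat
  have hXae : ∀ T : ℕ, AEMeasurable (fun ω => (T : ℝ) ^ (-(1 / 2 : ℝ)) *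
      ∑ t ∈ Finset.range T,
        ((T : ℝ) ^ (-θ) * ∑' j : ℕ, c21 T j * u1 ((t : ℤ) - (j : ℤ)) ω +
          ∑' j : ℕ, c22 T j * u2 ((t : ℤ) - (j : ℤ)) ω)) P := by
    intro T
    refine AEMeasurable.const_mul ?_ _
    refine Finset.aemeasurable_fun_sum _ (fun t _ => ?_)
    exact ((haemeas1 T _).const_mul _).add (haemeas2 T _)
  -- measurable modification
  set X' : ℕ → Ω → ℝ := fun T => (hXae T).mk _ with hX'def
  have hX'meas : ∀ T, Measurable (X' T) := fun T => (hXae T).measurable_mk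
  have hX'ae : ∀ T : ℕ, (fun ω => (T : ℝ) ^ (-(1 / 2 : ℝ)) *
      ∑ t ∈ Finset.range T,
        ((T : ℝ) ^ (-θ) * ∑' j : ℕ, c21 T j * u1 ((t : ℤ) - (j : ℤ)) ω +
          ∑' j : ℕ, c22 T j * u2 ((t : ℤ) - (j : ℤ)) ω)) =ᵐ[P] X' T :=
    fun T => (hXae T).ae_eq_mk
  -- the remainder bound
  set Cg : ℝ := ∑' j : ℕ, (j:ℝ) * ρ ^ j with hCgdef
  have hE1top : ENNReal.ofReal (2 * K * Cg) * m1 ≠ ⊤ :=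
    ENNReal.mul_ne_top ENNReal.ofReal_ne_top hm1
  have hE2top : ENNReal.ofReal (2 * K * Cg) * m2 ≠ ⊤ :=
    ENNReal.mul_ne_top ENNReal.ofReal_ne_top hm2
  have hbound : ∀ T : ℕ, 1 ≤ T →
      ∫⁻ ω, ‖((T : ℝ) ^ (-(1 / 2 : ℝ)) *
          ∑ t ∈ Finset.range T,
            ((T : ℝ) ^ (-θ) * ∑' j : ℕ, c21 T j * u1 ((t : ℤ) - (j : ℤ)) ω +
              ∑' j : ℕ, c22 T j * u2 ((t : ℤ) - (j : ℤ)) ω))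
        - ((∑' j : ℕ, c21 T j) * ((T : ℝ) ^ (-(1 / α)) * ∑ t ∈ Finset.range T, u1 (t : ℤ) ω)
          + (∑' j : ℕ, c22 T j) * ((T : ℝ) ^ (-(1 / 2 : ℝ)) * ∑ t ∈ Finset.range T, u2 (t : ℤ) ω))‖₊ ∂P
      ≤ ENNReal.ofReal ((T:ℝ) ^ (-(1/α))) * (ENNReal.ofReal (2 * K * Cg) * m1)
        + ENNReal.ofReal ((T:ℝ) ^ (-(1/2:ℝ))) * (ENNReal.ofReal (2 * K * Cg) * m2) := by
    intro T hT
    have hTpos : (0:ℝ) < (T:ℝ) := by exact_mod_cast Nat.lt_of_lt_of_le Nat.zero_lt_one hT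
    have hrpow : (T:ℝ) ^ (-(1/α)) = (T:ℝ) ^ (-(1/2:ℝ)) * (T:ℝ) ^ (-θ) := by
      rw [← Real.rpow_add hTpos]
      congr 1
      rw [hθ]; ring
    set D1 : Ω → ℝ := fun ω => (∑ t ∈ Finset.range T, ∑' j : ℕ, c21 T j * u1 ((t:ℤ) - (j:ℤ)) ω)
        - (∑' j : ℕ, c21 T j) * ∑ t ∈ Finset.range T, u1 (t:ℤ) ω with hD1def
    set D2 : Ω → ℝ := fun ω => (∑ t ∈ Finset.range T, ∑' j : ℕ, c22 T j * u2 ((t:ℤ) - (j:ℤ)) ω)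
        - (∑' j : ℕ, c22 T j) * ∑ t ∈ Finset.range T, u2 (t:ℤ) ω with hD2def
    have hD1ae : AEMeasurable D1 P := by
      refine AEMeasurable.sub (Finset.aemeasurable_fun_sum _ (fun t _ => haemeas1 T _)) ?_
      exact ((Finset.measurable_sum _ (fun t _ => hmeas1 _)).const_mul _).aemeasurable
    have hD2ae : AEMeasurable D2 P := by
      refine AEMeasurable.sub (Finset.aemeasurable_fun_sum _ (fun t _ => haemeas2 T _)) ?_
      exact ((Finset.measurable_sum _ (fun t _ => hmeas2 _)).const_mul _).aemeasurable
    have hid : ∀ ω, ((T : ℝ) ^ (-(1 / 2 : ℝ)) *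
          ∑ t ∈ Finset.range T,
            ((T : ℝ) ^ (-θ) * ∑' j : ℕ, c21 T j * u1 ((t : ℤ) - (j : ℤ)) ω +
              ∑' j : ℕ, c22 T j * u2 ((t : ℤ) - (j : ℤ)) ω))
        - ((∑' j : ℕ, c21 T j) * ((T : ℝ) ^ (-(1 / α)) * ∑ t ∈ Finset.range T, u1 (t : ℤ) ω)
          + (∑' j : ℕ, c22 T j) * ((T : ℝ) ^ (-(1 / 2 : ℝ)) * ∑ t ∈ Finset.range T, u2 (t : ℤ) ω))
        = (T:ℝ) ^ (-(1/α)) * D1 ω + (T:ℝ) ^ (-(1/2:ℝ)) * D2 ω := by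
      intro ω
      rw [hD1def, hD2def]
      simp only
      rw [Finset.sum_add_distrib, ← Finset.mul_sum, hrpow]
      ring
    have hnn : ∀ ω, (‖((T : ℝ) ^ (-(1 / 2 : ℝ)) *
          ∑ t ∈ Finset.range T,
            ((T : ℝ) ^ (-θ) * ∑' j : ℕ, c21 T j * u1 ((t : ℤ) - (j : ℤ)) ω +
              ∑' j : ℕ, c22 T j * u2 ((t : ℤ) - (j : ℤ)) ω))
        - ((∑' j : ℕ, c21 T j) * ((T : ℝ) ^ (-(1 / α)) * ∑ t ∈ Finset.range T, u1 (t : ℤ) ω)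
          + (∑' j : ℕ, c22 T j) * ((T : ℝ) ^ (-(1 / 2 : ℝ)) * ∑ t ∈ Finset.range T, u2 (t : ℤ) ω))‖₊ : ℝ≥0∞)
        ≤ ENNReal.ofReal ((T:ℝ) ^ (-(1/α))) * ‖D1 ω‖₊
          + ENNReal.ofReal ((T:ℝ) ^ (-(1/2:ℝ))) * ‖D2 ω‖₊ := by
      intro ω
      rw [hid ω]
      calc (‖(T:ℝ) ^ (-(1/α)) * D1 ω + (T:ℝ) ^ (-(1/2:ℝ)) * D2 ω‖₊ : ℝ≥0∞)
          ≤ (‖(T:ℝ) ^ (-(1/α)) * D1 ω‖₊ : ℝ≥0∞) + ‖(T:ℝ) ^ (-(1/2:ℝ)) * D2 ω‖₊ := by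
            exact_mod_cast nnnorm_add_le _ _
        _ = ENNReal.ofReal ((T:ℝ) ^ (-(1/α))) * ‖D1 ω‖₊
            + ENNReal.ofReal ((T:ℝ) ^ (-(1/2:ℝ))) * ‖D2 ω‖₊ := by
            rw [nnnorm_mul, nnnorm_mul, ENNReal.coe_mul, ENNReal.coe_mul]
            congr 2 <;>
            · rw [← enorm_eq_nnnorm, Real.enorm_eq_ofReal_abs,
                abs_of_nonneg (Real.rpow_nonneg hTpos.le _)]
    calc ∫⁻ ω, ‖((T : ℝ) ^ (-(1 / 2 : ℝ)) *
          ∑ t ∈ Finset.range T,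
            ((T : ℝ) ^ (-θ) * ∑' j : ℕ, c21 T j * u1 ((t : ℤ) - (j : ℤ)) ω +
              ∑' j : ℕ, c22 T j * u2 ((t : ℤ) - (j : ℤ)) ω))
        - ((∑' j : ℕ, c21 T j) * ((T : ℝ) ^ (-(1 / α)) * ∑ t ∈ Finset.range T, u1 (t : ℤ) ω)
          + (∑' j : ℕ, c22 T j) * ((T : ℝ) ^ (-(1 / 2 : ℝ)) * ∑ t ∈ Finset.range T, u2 (t : ℤ) ω))‖₊ ∂P
        ≤ ∫⁻ ω, (ENNReal.ofReal ((T:ℝ) ^ (-(1/α))) * ‖D1 ω‖₊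
            + ENNReal.ofReal ((T:ℝ) ^ (-(1/2:ℝ))) * ‖D2 ω‖₊) ∂P := lintegral_mono hnn
      _ = ENNReal.ofReal ((T:ℝ) ^ (-(1/α))) * ∫⁻ ω, (‖D1 ω‖₊ : ℝ≥0∞) ∂P
          + ENNReal.ofReal ((T:ℝ) ^ (-(1/2:ℝ))) * ∫⁻ ω, (‖D2 ω‖₊ : ℝ≥0∞) ∂P := by
          rw [lintegral_add_left' (hD1ae.nnnorm.coe_nnreal_ennreal.const_mul _)]
          rw [lintegral_const_mul' _ _ ENNReal.ofReal_ne_top,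
            lintegral_const_mul' _ _ ENNReal.ofReal_ne_top]
      _ ≤ ENNReal.ofReal ((T:ℝ) ^ (-(1/α))) * (ENNReal.ofReal (2 * K * Cg) * m1)
          + ENNReal.ofReal ((T:ℝ) ^ (-(1/2:ℝ))) * (ENNReal.ofReal (2 * K * Cg) * m2) := by
          refine add_le_add (mul_le_mul_right ?_ _) (mul_le_mul_right ?_ _)
          · exact hl_core u1 hmeas1 m1 hm1 hmom1 (c21 T) K ρ hK hρ₀ hρ₁ (hdecay21 T) T
          · exact hl_core u2 hmeas2 m2 hm2 hmom2 (c22 T) K ρ hK hρ₀ hρ₁ (hdecay22 T) T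
  -- remainder tends to zero
  have hRlim : Tendsto (fun T : ℕ => ∫⁻ ω, ‖X' T ω
      - ((∑' j : ℕ, c21 T j) * ((T : ℝ) ^ (-(1 / α)) * ∑ t ∈ Finset.range T, u1 (t : ℤ) ω)
        + (∑' j : ℕ, c22 T j) * ((T : ℝ) ^ (-(1 / 2 : ℝ)) * ∑ t ∈ Finset.range T, u2 (t : ℤ) ω))‖₊ ∂P)
      atTop (𝓝 0) := by
    have hcongr : ∀ T : ℕ, ∫⁻ ω, ‖X' T ω
        - ((∑' j : ℕ, c21 T j) * ((T : ℝ) ^ (-(1 / α)) * ∑ t ∈ Finset.range T, u1 (t : ℤ) ω)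
          + (∑' j : ℕ, c22 T j) * ((T : ℝ) ^ (-(1 / 2 : ℝ)) * ∑ t ∈ Finset.range T, u2 (t : ℤ) ω))‖₊ ∂P
        = ∫⁻ ω, ‖((T : ℝ) ^ (-(1 / 2 : ℝ)) *
            ∑ t ∈ Finset.range T,
              ((T : ℝ) ^ (-θ) * ∑' j : ℕ, c21 T j * u1 ((t : ℤ) - (j : ℤ)) ω +
                ∑' j : ℕ, c22 T j * u2 ((t : ℤ) - (j : ℤ)) ω))
          - ((∑' j : ℕ, c21 T j) * ((T : ℝ) ^ (-(1 / α)) * ∑ t ∈ Finset.range T, u1 (t : ℤ) ω)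
            + (∑' j : ℕ, c22 T j) * ((T : ℝ) ^ (-(1 / 2 : ℝ)) * ∑ t ∈ Finset.range T, u2 (t : ℤ) ω))‖₊ ∂P := by
      intro T
      refine lintegral_congr_ae ?_
      filter_upwards [hX'ae T] with ω hω
      rw [← hω]
    have ht1 : Tendsto (fun T : ℕ =>
        ENNReal.ofReal ((T:ℝ) ^ (-(1/α))) * (ENNReal.ofReal (2 * K * Cg) * m1)) atTop (𝓝 0) := by
      have h0 : Tendsto (fun T : ℕ => (T:ℝ) ^ (-(1/α))) atTop (𝓝 0) :=
        (tendsto_rpow_neg_atTop (by positivity)).comp tendsto_natCast_atTop_atTop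
      have := ENNReal.Tendsto.mul_const (ENNReal.tendsto_ofReal h0) (Or.inr hE1top)
      simpa using this
    have ht2 : Tendsto (fun T : ℕ =>
        ENNReal.ofReal ((T:ℝ) ^ (-(1/2:ℝ))) * (ENNReal.ofReal (2 * K * Cg) * m2)) atTop (𝓝 0) := by
      have h0 : Tendsto (fun T : ℕ => (T:ℝ) ^ (-(1/2:ℝ))) atTop (𝓝 0) :=
        (tendsto_rpow_neg_atTop (by norm_num)).comp tendsto_natCast_atTop_atTop
      have := ENNReal.Tendsto.mul_const (ENNReal.tendsto_ofReal h0) (Or.inr hE2top)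
      simpa using this
    have hsum : Tendsto (fun T : ℕ =>
        ENNReal.ofReal ((T:ℝ) ^ (-(1/α))) * (ENNReal.ofReal (2 * K * Cg) * m1)
          + ENNReal.ofReal ((T:ℝ) ^ (-(1/2:ℝ))) * (ENNReal.ofReal (2 * K * Cg) * m2))
        atTop (𝓝 0) := by
      have := ht1.add ht2
      simpa using this
    refine tendsto_of_tendsto_of_tendsto_of_le_of_le' tendsto_const_nhds hsum
      (Eventually.of_forall fun T => zero_le) ?_
    filter_upwards [eventually_ge_atTop 1] with T hT
    rw [hcongr T]
    exact hbound T hT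
  -- conclude via Slutsky
  have hjoint' : ∀ g : (ℝ × ℝ) →ᵇ ℝ,
      Tendsto (fun T : ℕ => ∫ ω, g ((fun (T : ℕ) ω => (T : ℝ) ^ (-(1 / α)) *
          ∑ t ∈ Finset.range T, u1 (t : ℤ) ω) T ω,
        (fun (T : ℕ) ω => (T : ℝ) ^ (-(1 / 2 : ℝ)) * ∑ t ∈ Finset.range T, u2 (t : ℤ) ω) T ω) ∂P)
      atTop (𝓝 (∫ ω, g (Su ω, Nu ω) ∂P)) := fun g => hjoint g
  have hmain := hl_slutsky
    (fun (T : ℕ) ω => (T : ℝ) ^ (-(1 / α)) * ∑ t ∈ Finset.range T, u1 (t : ℤ) ω)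
    (fun (T : ℕ) ω => (T : ℝ) ^ (-(1 / 2 : ℝ)) * ∑ t ∈ Finset.range T, u2 (t : ℤ) ω)
    (fun T => (Finset.measurable_sum _ (fun t _ => hmeas1 _)).const_mul _)
    (fun T => (Finset.measurable_sum _ (fun t _ => hmeas2 _)).const_mul _)
    Su Nu hSu hNu hjoint'
    (∑' j : ℕ, c21s j) (∑' j : ℕ, c22s j)
    (fun T => ∑' j : ℕ, c21 T j) (fun T => ∑' j : ℕ, c22 T j)
    ha hb X' hX'meas hRlim f
  refine Tendsto.congr (fun T => ?_) hmain
  refine integral_congr_ae ?_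
  filter_upwards [hX'ae T] with ω hω
  rw [← hω]
end
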